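/- arXiv:2312.17302 — 5 statements merged into one kernel-verified Lean document; each statement's English description precedes it below -/
import Mathlib

section
/- Let F be a field, n ≥ 2 a natural number, and suppose F contains a primitive n-th root of unity. Then for any s ∈ F, the polynomial X^n − s is irreducible in F[X] if and only if for every divisor m of n with m ≠ 1, s is not an m-th power in F (i.e., there is no u ∈ F with u^m = s). -/
open Polynomial

/-- If a monic `g` divides `X ^ n - C s`, then the constant coefficient `c` of `g`
satisfies `c ^ n = ((-1) ^ n * s) ^ g.natDegree`. -/
lemma aux_coeff_pow {F : Type*} [Field F] {n : ℕ} {s : F} {g : F[X]} (hg : g.Monic)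
    (hdvd : g ∣ X ^ n - C s) :
    (g.coeff 0) ^ n = ((-1) ^ n * s) ^ g.natDegree := by
  classical
  set K := AlgebraicClosure F
  let φ : F →+* K := algebraMap F K
  have hinj : Function.Injective φ := φ.injective
  have hgK : (g.map φ).Monic := hg.map φ
  have hdvdK : g.map φ ∣ X ^ n - C (φ s) := by
    have := Polynomial.map_dvd φ hdvd
    simpa [Polynomial.map_sub, Polynomial.map_pow] using this
  have hsplit : (g.map φ).Splits := IsAlgClosed.splits _
  have hprod : g.map φ = ((g.map φ).roots.map fun r => X - C r).prod :=
    hsplit.eq_prod_roots_of_monic hgK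
  have hcard : Multiset.card (g.map φ).roots = g.natDegree := by
    rw [splits_iff_card_roots.mp hsplit, g.natDegree_map φ]
  -- every root r satisfies r ^ n = φ s
  have hroot : ∀ r ∈ (g.map φ).roots, r ^ n = φ s := by
    intro r hr
    have h1 : (g.map φ).IsRoot r := isRoot_of_mem_roots hr
    have h2 : (X ^ n - C (φ s) : K[X]).eval r = 0 :=
      eval_eq_zero_of_dvd_of_eval_eq_zero hdvdK h1
    have h3 : r ^ n - φ s = 0 := by simpa using h2
    exact sub_eq_zero.mp h3
  -- constant coefficient
  have hc0 : φ (g.coeff 0) = (-1) ^ g.natDegree * (g.map φ).roots.prod := by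
    have h1 : φ (g.coeff 0) = (g.map φ).eval 0 := by
      rw [eval_map, eval₂_at_zero]
    rw [h1]
    conv_lhs => rw [hprod]
    rw [eval_multiset_prod, Multiset.map_map]
    have : ((g.map φ).roots.map fun r => (X - C r).eval 0) = (g.map φ).roots.map Neg.neg := by
      apply Multiset.map_congr rfl
      intro r _
      simp
    rw [Function.comp_def]
    simp only [eval_sub, eval_X, eval_C, zero_sub]
    rw [show ((g.map φ).roots.map fun r => -r) = (g.map φ).roots.map Neg.neg from rfl,
      Multiset.prod_map_neg, hcard]
  apply hinj
  rw [map_pow, hc0, mul_pow, ← pow_mul]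
  have hpr : ((g.map φ).roots.prod) ^ n = (φ s) ^ g.natDegree := by
    have h1 : ((g.map φ).roots.map fun r => r ^ n).prod = ((g.map φ).roots.prod) ^ n := by
      have := Multiset.prod_map_pow (m := (g.map φ).roots) (f := id) (n := n)
      simpa using this
    have h2 : ((g.map φ).roots.map fun r => r ^ n).prod
        = ((g.map φ).roots.map fun _ => φ s).prod := by
      apply congrArg Multiset.prod
      exact Multiset.map_congr rfl hroot
    rw [← h1, h2, Multiset.map_const', Multiset.prod_replicate, hcard]
  rw [hpr, map_pow, map_mul, map_pow, map_neg, map_one, mul_pow, ← pow_mul, mul_comm n]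
theorem aux_power {F : Type*} [Field F] {n d : ℕ} {ζ c t : F} (hζ : IsPrimitiveRoot ζ n)
    (hn : n ≠ 0) (hd : d ≠ 0) (ht : t ≠ 0) (hc : c ^ n = t ^ d) :
    ∃ u : F, u ^ (n / Nat.gcd n d) = t := by
  set e := Nat.gcd n d with he
  have he0 : e ≠ 0 := Nat.gcd_ne_zero_left hn
  have hed : e ∣ n := Nat.gcd_dvd_left n d
  obtain ⟨m, hm⟩ := hed
  have hm' : n / e = m := by rw [hm, Nat.mul_div_cancel_left _ (Nat.pos_of_ne_zero he0)]
  have hcne : c ≠ 0 := by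
    intro h
    rw [h, zero_pow hn] at hc
    exact ht (pow_eq_zero_iff hd |>.mp hc.symm)
  have hbez : (e : ℤ) = n * Nat.gcdA n d + d * Nat.gcdB n d := Nat.gcd_eq_gcd_ab n d
  set a := Nat.gcdA n d with ha
  set b := Nat.gcdB n d with hb
  set u₀ : F := t ^ a * c ^ b with hu₀
  have key : u₀ ^ n = t ^ e := by
    have h1 : u₀ ^ (n : ℤ) = t ^ ((n : ℤ) * a) * c ^ ((n : ℤ) * b) := by
      rw [hu₀, mul_zpow, ← zpow_mul, ← zpow_mul, mul_comm a, mul_comm b]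
    have h2 : c ^ ((n : ℤ) * b) = t ^ ((d : ℤ) * b) := by
      rw [zpow_mul, zpow_mul, zpow_natCast, zpow_natCast, hc]
    have h3 : u₀ ^ (n : ℤ) = t ^ ((n : ℤ) * a + (d : ℤ) * b) := by
      rw [h1, h2, zpow_add₀ ht]
    rw [← zpow_natCast u₀ n, h3, ← hbez, zpow_natCast]
  have hmn : n = m * e := by rw [hm, mul_comm]
  haveI : NeZero e := ⟨he0⟩
  have hζm : IsPrimitiveRoot (ζ ^ m) e := hζ.pow (Nat.pos_of_ne_zero hn) hmn
  have hu0ne : u₀ ≠ 0 := by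
    intro h
    rw [h, zero_pow hn] at key
    exact pow_ne_zero e ht key.symm
  have hpow : (u₀ ^ m / t) ^ e = 1 := by
    rw [div_pow, ← pow_mul, ← hmn, key, div_self (pow_ne_zero e ht)]
  obtain ⟨i, _, hi⟩ := hζm.eq_pow_of_pow_eq_one hpow
  have hζne : ζ ≠ 0 := hζ.ne_zero hn
  refine ⟨u₀ / ζ ^ i, ?_⟩
  rw [hm', div_pow, ← pow_right_comm ζ m i, hi, div_div_eq_mul_div,
    mul_div_cancel_left₀ t (pow_ne_zero m hu0ne)]
/-- Let `F` be a field, `n ≥ 2`, and suppose `F` contains a primitive `n`-th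
root of unity `q`. Then for any `s ∈ F`, the polynomial `X^n − s` is irreducible over `F` iff
for every divisor `m` of `n` with `m ≠ 1`, `s` is not an `m`-th power in `F`. -/
theorem stmt_0 (F : Type*) [Field F] (n : ℕ) (hn : 2 ≤ n) (q : F)
    (hq : IsPrimitiveRoot q n) (s : F) :
    Irreducible (X ^ n - C s : F[X]) ↔
      ∀ m : ℕ, m ∣ n → m ≠ 1 → ¬ ∃ u : F, u ^ m = s := by
  constructor
  · intro H m hm hm1 ⟨u, hu⟩
    exact pow_ne_of_irreducible_X_pow_sub_C H hm hm1 u hu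
  · intro H
    have hn0 : n ≠ 0 := by omega
    have hs : s ≠ 0 := by
      intro h
      exact H n dvd_rfl (by omega) ⟨0, by rw [zero_pow hn0, h]⟩
    have hmonic : (X ^ n - C s : F[X]).Monic := monic_X_pow_sub_C s hn0
    have hdeg : (X ^ n - C s : F[X]).natDegree = n := natDegree_X_pow_sub_C
    have hne1 : (X ^ n - C s : F[X]) ≠ 1 := by
      intro h
      rw [h, natDegree_one] at hdeg
      omega
    rw [irreducible_of_monic hmonic hne1]
    intro f g hf hg hfg
    by_contra hcon
    push_neg at hcon
    obtain ⟨hf1, hg1⟩ := hcon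
    have hfd : f.natDegree ≠ 0 := fun h => hf1 (hf.natDegree_eq_zero.mp h)
    have hgd : g.natDegree ≠ 0 := fun h => hg1 (hg.natDegree_eq_zero.mp h)
    have hsum : f.natDegree + g.natDegree = n := by
      have h1 := natDegree_mul hf.ne_zero hg.ne_zero
      rw [hfg, hdeg] at h1
      omega
    have hflt : f.natDegree < n := by omega
    have hdvd : f ∣ X ^ n - C s := ⟨g, hfg.symm⟩
    have hc := aux_coeff_pow hf hdvd
    have ht : ((-1 : F) ^ n * s) ≠ 0 := by
      apply mul_ne_zero _ hs
      exact pow_ne_zero n (by norm_num)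
    obtain ⟨u, hu⟩ := aux_power hq hn0 hfd ht hc
    set e := Nat.gcd n f.natDegree with he
    have hed : e ∣ n := Nat.gcd_dvd_left _ _
    have hee : e ≤ f.natDegree :=
      Nat.le_of_dvd (Nat.pos_of_ne_zero hfd) (Nat.gcd_dvd_right _ _)
    have hmdvd : n / e ∣ n := Nat.div_dvd_of_dvd hed
    have hm1 : n / e ≠ 1 := by
      intro h
      have := Nat.mul_div_cancel' hed
      rw [h, mul_one] at this
      omega
    apply H (n / e) hmdvd hm1
    refine ⟨(-1) ^ e * u, ?_⟩
    rw [mul_pow, hu, ← pow_mul, Nat.mul_div_cancel' hed, ← mul_assoc, ← pow_add]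
    have : Even (n + n) := ⟨n, rfl⟩
    rw [this.neg_one_pow, one_mul]
end

section
/- Let F be a field, n ≥ 2, q ∈ F a primitive n-th root of unity, and s, a ∈ F. Let 𝓔 = (E(s), σ, a) be the F-algebra generated by h and x subject to x·h = q·h·x, h^n = s, x^n = a. Then 𝓔 is a simple ring if and only if s ≠ 0 and a ≠ 0. Moreover, if s ≠ 0 and a ≠ 0, then 𝓔 is a central simple F-algebra of degree n: the center of 𝓔 is F·1 and dim_F 𝓔 = n². -/
set_option linter.unusedSectionVars false
set_option linter.unusedVariables false


/-- The defining relations of the algebra `𝓔 = (E(s), σ, a)`: it is generated over `F` by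
`h` (the generator `ι F 0`) and `x` (the generator `ι F 1`) subject to
`x·h = q·h·x`, `h^n = s`, `x^n = a`. -/
inductive CERel (F : Type) [Field F] (n : ℕ) (q s a : F) :
    FreeAlgebra F (Fin 2) → FreeAlgebra F (Fin 2) → Prop
  | comm : CERel F n q s a (FreeAlgebra.ι F (1 : Fin 2) * FreeAlgebra.ι F (0 : Fin 2))
      (algebraMap F (FreeAlgebra F (Fin 2)) q *
        (FreeAlgebra.ι F (0 : Fin 2) * FreeAlgebra.ι F (1 : Fin 2)))
  | hpow : CERel F n q s a (FreeAlgebra.ι F (0 : Fin 2) ^ n)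
      (algebraMap F (FreeAlgebra F (Fin 2)) s)
  | xpow : CERel F n q s a (FreeAlgebra.ι F (1 : Fin 2) ^ n)
      (algebraMap F (FreeAlgebra F (Fin 2)) a)

/-- The algebra `𝓔 = (E(s), σ, a)`: the quotient of the free `F`-algebra `F⟨h,x⟩` by the
two-sided ideal generated by `x·h − q·h·x`, `h^n − s`, `x^n − a`. -/
abbrev CE (F : Type) [Field F] (n : ℕ) (q s a : F) : Type := RingQuot (CERel F n q s a)

/-- The image of the generator `h` in `𝓔`. -/
noncomputable def CEh (F : Type) [Field F] (n : ℕ) (q s a : F) : CE F n q s a :=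
  RingQuot.mkAlgHom F (CERel F n q s a) (FreeAlgebra.ι F (0 : Fin 2))

/-- The image of the generator `x` in `𝓔`. -/
noncomputable def CEx (F : Type) [Field F] (n : ℕ) (q s a : F) : CE F n q s a :=
  RingQuot.mkAlgHom F (CERel F n q s a) (FreeAlgebra.ι F (1 : Fin 2))

namespace CEProof

open scoped TensorProduct

variable (F : Type) [Field F] (n : ℕ) (q s a : F)

lemma rel1 : CEx F n q s a * CEh F n q s a = q • (CEh F n q s a * CEx F n q s a) := by
  have := RingQuot.mkAlgHom_rel F (CERel.comm (F := F) (n := n) (q := q) (s := s) (a := a))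
  simpa [CEx, CEh, map_mul, Algebra.smul_def] using this

lemma rel2 : CEh F n q s a ^ n = algebraMap F (CE F n q s a) s := by
  have := RingQuot.mkAlgHom_rel F (CERel.hpow (F := F) (n := n) (q := q) (s := s) (a := a))
  simpa [CEh, map_pow] using this

lemma rel3 : CEx F n q s a ^ n = algebraMap F (CE F n q s a) a := by
  have := RingQuot.mkAlgHom_rel F (CERel.xpow (F := F) (n := n) (q := q) (s := s) (a := a))
  simpa [CEx, map_pow] using this

lemma comm_pow1 (k : ℕ) :
    CEx F n q s a * CEh F n q s a ^ k = q ^ k • (CEh F n q s a ^ k * CEx F n q s a) := by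
  induction k with
  | zero => simp
  | succ k ih =>
    rw [pow_succ, ← mul_assoc, ih, smul_mul_assoc, mul_assoc, rel1, mul_smul_comm,
      smul_smul, pow_succ, ← mul_assoc]

lemma comm_pow (j k : ℕ) :
    CEx F n q s a ^ j * CEh F n q s a ^ k =
      q ^ (j * k) • (CEh F n q s a ^ k * CEx F n q s a ^ j) := by
  induction j with
  | zero => simp
  | succ j ih =>
    rw [pow_succ, mul_assoc, comm_pow1, mul_smul_comm, ← mul_assoc, ih, smul_mul_assoc,
      smul_smul, mul_assoc, ← pow_add]
    ring_nf

lemma hred (m : ℕ) :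
    CEh F n q s a ^ m = s ^ (m / n) • CEh F n q s a ^ (m % n) := by
  conv_lhs => rw [← Nat.div_add_mod m n]
  rw [pow_add, pow_mul, rel2, ← map_pow, Algebra.smul_def]

lemma xred (m : ℕ) :
    CEx F n q s a ^ m = a ^ (m / n) • CEx F n q s a ^ (m % n) := by
  conv_lhs => rw [← Nat.div_add_mod m n]
  rw [pow_add, pow_mul, rel3, ← map_pow, Algebra.smul_def]

noncomputable def B (p : Fin n × Fin n) : CE F n q s a :=
  CEh F n q s a ^ (p.1 : ℕ) * CEx F n q s a ^ (p.2 : ℕ)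

variable [NeZero n]

lemma B_mul (p r : Fin n × Fin n) :
    B F n q s a p * B F n q s a r =
      (q ^ ((p.2 : ℕ) * (r.1 : ℕ)) * s ^ (((p.1 : ℕ) + (r.1 : ℕ)) / n)
        * a ^ (((p.2 : ℕ) + (r.2 : ℕ)) / n)) • B F n q s a (p.1 + r.1, p.2 + r.2) := by
  unfold B
  rw [mul_assoc, ← mul_assoc (CEx F n q s a ^ (p.2 : ℕ)), comm_pow, smul_mul_assoc,
    mul_smul_comm, ← mul_assoc, ← mul_assoc, mul_assoc (CEh F n q s a ^ (p.1:ℕ) * CEh F n q s a ^ (r.1:ℕ)), ← pow_add, ← pow_add,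
    hred F n q s a ((p.1:ℕ) + (r.1:ℕ)), xred F n q s a ((p.2:ℕ) + (r.2:ℕ))]
  have h1 : ((p.1 + r.1 : Fin n) : ℕ) = ((p.1 : ℕ) + (r.1 : ℕ)) % n := by
    simp [Fin.add_def]
  have h2 : ((p.2 + r.2 : Fin n) : ℕ) = ((p.2 : ℕ) + (r.2 : ℕ)) % n := by
    simp [Fin.add_def]
  rw [h1, h2, smul_mul_assoc, mul_smul_comm, smul_smul, smul_smul]


lemma B_zero : B F n q s a (0, 0) = 1 := by
  simp [B]

lemma fin_val_one (hn : 2 ≤ n) : ((1 : Fin n) : ℕ) = 1 := by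
  rw [Fin.val_one' n]; exact Nat.mod_eq_of_lt (by omega)

lemma B_h (hn : 2 ≤ n) : B F n q s a (1, 0) = CEh F n q s a := by
  unfold B; rw [fin_val_one n hn]; simp

lemma B_x (hn : 2 ≤ n) : B F n q s a (0, 1) = CEx F n q s a := by
  unfold B; rw [fin_val_one n hn]; simp

lemma B_span (hn : 2 ≤ n) :
    ⊤ ≤ Submodule.span F (Set.range (B F n q s a)) := by
  rintro z -
  obtain ⟨w, rfl⟩ := RingQuot.mkAlgHom_surjective F (CERel F n q s a) z
  induction w using FreeAlgebra.induction with
  | grade0 r =>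
    have : (RingQuot.mkAlgHom F (CERel F n q s a)) (algebraMap F _ r)
        = r • B F n q s a (0, 0) := by
      rw [B_zero, AlgHom.commutes, Algebra.algebraMap_eq_smul_one]
    rw [this]
    exact Submodule.smul_mem _ _ (Submodule.subset_span ⟨_, rfl⟩)
  | grade1 i =>
    fin_cases i
    · show (RingQuot.mkAlgHom F (CERel F n q s a)) (FreeAlgebra.ι F (0 : Fin 2)) ∈ _
      rw [show (RingQuot.mkAlgHom F (CERel F n q s a)) (FreeAlgebra.ι F (0 : Fin 2))
        = B F n q s a (1, 0) from (B_h F n q s a hn).symm]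
      exact Submodule.subset_span ⟨_, rfl⟩
    · show (RingQuot.mkAlgHom F (CERel F n q s a)) (FreeAlgebra.ι F (1 : Fin 2)) ∈ _
      rw [show (RingQuot.mkAlgHom F (CERel F n q s a)) (FreeAlgebra.ι F (1 : Fin 2))
        = B F n q s a (0, 1) from (B_x F n q s a hn).symm]
      exact Submodule.subset_span ⟨_, rfl⟩
  | mul u v hu hv =>
    rw [map_mul]
    have h := Submodule.mul_mem_mul hu hv
    rw [Submodule.span_mul_span] at h
    refine Submodule.span_le.mpr ?_ h
    rintro _ ⟨_, ⟨p, rfl⟩, _, ⟨r, rfl⟩, rfl⟩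
    show B F n q s a p * B F n q s a r ∈ _
    rw [B_mul]
    exact Submodule.smul_mem _ _ (Submodule.subset_span ⟨_, rfl⟩)
  | add u v hu hv =>
    rw [map_add]
    exact Submodule.add_mem _ hu hv


open Polynomial in
abbrev Kk : Type := AdjoinRoot ((X : F[X]) ^ n - C s)

open Polynomial in
abbrev Ll : Type := AdjoinRoot ((X : F[X]) ^ n - C a)

lemma rootK_pow : (AdjoinRoot.root _ : Kk F n s) ^ n = algebraMap F _ s := by
  have h := AdjoinRoot.eval₂_root ((Polynomial.X : Polynomial F) ^ n - Polynomial.C s)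
  rw [Polynomial.eval₂_sub, Polynomial.eval₂_pow, Polynomial.eval₂_X, Polynomial.eval₂_C,
    sub_eq_zero] at h
  rw [h, AdjoinRoot.algebraMap_eq]

lemma rootL_pow : (AdjoinRoot.root _ : Ll F n a) ^ n = algebraMap F _ a := by
  have h := AdjoinRoot.eval₂_root ((Polynomial.X : Polynomial F) ^ n - Polynomial.C a)
  rw [Polynomial.eval₂_sub, Polynomial.eval₂_pow, Polynomial.eval₂_X, Polynomial.eval₂_C,
    sub_eq_zero] at h
  rw [h, AdjoinRoot.algebraMap_eq]

variable {q} in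
lemma q_ne_zero (hq1 : q ^ n = 1) : q ≠ 0 := by
  intro h
  rw [h, zero_pow (NeZero.ne n)] at hq1
  exact zero_ne_one hq1

noncomputable def Dmap (hq1 : q ^ n = 1) : Ll F n a →ₐ[F] Ll F n a :=
  AdjoinRoot.liftAlgHom _ (Algebra.ofId F _) (algebraMap F _ q⁻¹ * AdjoinRoot.root _) (by
    show Polynomial.aeval (algebraMap F _ q⁻¹ * AdjoinRoot.root _)
      ((Polynomial.X : Polynomial F) ^ n - Polynomial.C a) = 0
    rw [map_sub, map_pow, Polynomial.aeval_X, Polynomial.aeval_C, mul_pow, ← map_pow,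
      rootL_pow, inv_pow, hq1, inv_one, map_one, one_mul, sub_self])

lemma Dmap_root (hq1 : q ^ n = 1) :
    Dmap F n q a hq1 (AdjoinRoot.root _) =
      algebraMap F (Ll F n a) q⁻¹ * AdjoinRoot.root _ := by
  unfold Dmap
  exact AdjoinRoot.liftAlgHom_root _ _ _ _

lemma Dpow (hq1 : q ^ n = 1) (m : ℕ) :
    ∃ E : Ll F n a →ₐ[F] Ll F n a, E.toLinearMap = (Dmap F n q a hq1).toLinearMap ^ m ∧
      E (AdjoinRoot.root _) = algebraMap F _ (q⁻¹ ^ m) * AdjoinRoot.root _ := by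
  induction m with
  | zero =>
    exact ⟨AlgHom.id F _, by rw [pow_zero]; rfl, by simp⟩
  | succ m ih =>
    obtain ⟨E, hE1, hE2⟩ := ih
    refine ⟨(Dmap F n q a hq1).comp E, ?_, ?_⟩
    · rw [pow_succ']
      ext ℓ
      simp [hE1, Module.End.mul_apply]
    · rw [AlgHom.comp_apply, hE2, map_mul, AlgHom.commutes, Dmap_root, pow_succ]
      rw [map_mul, ← mul_assoc]

noncomputable def hE (hq1 : q ^ n = 1) : Module.End F (Kk F n s ⊗[F] Ll F n a) :=
  TensorProduct.map (LinearMap.mulLeft F (AdjoinRoot.root _)) (Dmap F n q a hq1).toLinearMap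

noncomputable def xE : Module.End F (Kk F n s ⊗[F] Ll F n a) :=
  TensorProduct.map LinearMap.id (LinearMap.mulLeft F (AdjoinRoot.root _))

lemma relE1 (hq1 : q ^ n = 1) :
    xE F n s a * hE F n q s a hq1 = q • (hE F n q s a hq1 * xE F n s a) := by
  unfold xE hE
  rw [← TensorProduct.map_mul, ← TensorProduct.map_mul, ← TensorProduct.map_smul_right]
  have h1 : (LinearMap.id : Kk F n s →ₗ[F] _) * LinearMap.mulLeft F (AdjoinRoot.root _ : Kk F n s)
      = LinearMap.mulLeft F (AdjoinRoot.root _ : Kk F n s) * LinearMap.id := by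
    rw [← Module.End.one_eq_id, one_mul, mul_one]
  rw [h1]
  congr 1
  ext ℓ
  rw [Module.End.mul_apply, LinearMap.smul_apply, Module.End.mul_apply,
    LinearMap.mulLeft_apply, LinearMap.mulLeft_apply]
  show AdjoinRoot.root _ * Dmap F n q a hq1 ℓ = q • Dmap F n q a hq1 (AdjoinRoot.root _ * ℓ)
  rw [map_mul, Dmap_root, Algebra.smul_def, ← mul_assoc, ← mul_assoc, ← map_mul,
    mul_inv_cancel₀ (q_ne_zero F n hq1), map_one, one_mul]

lemma relE2 (hq1 : q ^ n = 1) :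
    hE F n q s a hq1 ^ n = algebraMap F _ s := by
  unfold hE
  rw [TensorProduct.map_pow, LinearMap.pow_mulLeft, rootK_pow]
  obtain ⟨E, hE1, hE2⟩ := Dpow F n q a hq1 n
  rw [← hE1]
  have hEid : E = AlgHom.id F _ := by
    refine AdjoinRoot.algHom_ext ?_
    rw [hE2, inv_pow, hq1, inv_one, map_one, one_mul, AlgHom.coe_id, id_eq]
  rw [hEid]
  have h2 : LinearMap.mulLeft F (algebraMap F (Kk F n s) s) = s • LinearMap.id := by
    ext y
    simp [Algebra.smul_def]
  rw [h2]
  have : (AlgHom.id F (Ll F n a)).toLinearMap = LinearMap.id := rfl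
  rw [this, TensorProduct.map_smul_left, TensorProduct.map_id,
    Module.algebraMap_end_eq_smul_id]

lemma relE3 (hq1 : q ^ n = 1) :
    xE F n s a ^ n = algebraMap F (Module.End F (Kk F n s ⊗[F] Ll F n a)) a := by
  unfold xE
  rw [TensorProduct.map_pow, LinearMap.pow_mulLeft, rootL_pow]
  have h2 : LinearMap.mulLeft F (algebraMap F (Ll F n a) a) = a • LinearMap.id := by
    ext y
    simp [Algebra.smul_def]
  have h3 : (LinearMap.id : Kk F n s →ₗ[F] _) ^ n = LinearMap.id := by
    rw [← Module.End.one_eq_id, one_pow]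
  rw [h2, h3, TensorProduct.map_smul_right, TensorProduct.map_id,
    Module.algebraMap_end_eq_smul_id]

noncomputable def rho (hq1 : q ^ n = 1) :
    CE F n q s a →ₐ[F] Module.End F (Kk F n s ⊗[F] Ll F n a) :=
  RingQuot.liftAlgHom F ⟨FreeAlgebra.lift F ![hE F n q s a hq1, xE F n s a], by
    rintro x y (h | h | h)
    · simp only [map_mul, FreeAlgebra.lift_ι_apply, AlgHom.commutes, Matrix.cons_val_one,
        Matrix.head_cons, Matrix.cons_val_zero]
      rw [relE1 F n q s a hq1, Algebra.smul_def]
    · simp only [map_pow, FreeAlgebra.lift_ι_apply, AlgHom.commutes, Matrix.cons_val_zero]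
      rw [relE2 F n q s a hq1]
    · simp only [map_pow, FreeAlgebra.lift_ι_apply, AlgHom.commutes, Matrix.cons_val_one,
        Matrix.head_cons, Matrix.cons_val_zero]
      rw [relE3 F n q s a hq1]⟩

lemma rho_h (hq1 : q ^ n = 1) : rho F n q s a hq1 (CEh F n q s a) = hE F n q s a hq1 := by
  rw [CEh, rho, RingQuot.liftAlgHom_mkAlgHom_apply]
  simp [FreeAlgebra.lift_ι_apply]

lemma rho_x (hq1 : q ^ n = 1) : rho F n q s a hq1 (CEx F n q s a) = xE F n s a := by
  rw [CEx, rho, RingQuot.liftAlgHom_mkAlgHom_apply]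
  simp [FreeAlgebra.lift_ι_apply]


noncomputable def bK : Module.Basis (Fin n) F (Kk F n s) :=
  (AdjoinRoot.powerBasis' (Polynomial.monic_X_pow_sub_C s (NeZero.ne n))).basis.reindex
    (finCongr (by simp [Polynomial.natDegree_X_pow_sub_C]))

noncomputable def bL : Module.Basis (Fin n) F (Ll F n a) :=
  (AdjoinRoot.powerBasis' (Polynomial.monic_X_pow_sub_C a (NeZero.ne n))).basis.reindex
    (finCongr (by simp [Polynomial.natDegree_X_pow_sub_C]))

lemma bK_apply (i : Fin n) : bK F n s i = (AdjoinRoot.root _ : Kk F n s) ^ (i : ℕ) := by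
  rw [bK, Module.Basis.reindex_apply, PowerBasis.basis_eq_pow]
  simp

lemma bL_apply (i : Fin n) : bL F n a i = (AdjoinRoot.root _ : Ll F n a) ^ (i : ℕ) := by
  rw [bL, Module.Basis.reindex_apply, PowerBasis.basis_eq_pow]
  simp

noncomputable def bV : Module.Basis (Fin n × Fin n) F (Kk F n s ⊗[F] Ll F n a) :=
  Module.Basis.tensorProduct (bK F n s) (bL F n a)

noncomputable def Phi (hq1 : q ^ n = 1) : CE F n q s a →ₗ[F] Kk F n s ⊗[F] Ll F n a :=
  (LinearMap.applyₗ ((1 : Kk F n s) ⊗ₜ[F] (1 : Ll F n a))).comp (rho F n q s a hq1).toLinearMap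

set_option maxHeartbeats 1000000 in
lemma Phi_B (hq1 : q ^ n = 1) (p : Fin n × Fin n) :
    Phi F n q s a hq1 (B F n q s a p) =
      (q⁻¹ ^ ((p.1 : ℕ) * (p.2 : ℕ))) • bV F n s a p := by
  obtain ⟨E, hE1, hE2⟩ := Dpow F n q a hq1 (p.1 : ℕ)
  rw [Phi, LinearMap.comp_apply, AlgHom.toLinearMap_apply, B, map_mul, map_pow, map_pow,
    rho_h, rho_x]
  show (hE F n q s a hq1 ^ (p.1 : ℕ) * xE F n s a ^ (p.2 : ℕ))
      ((1 : Kk F n s) ⊗ₜ[F] (1 : Ll F n a)) = _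
  have h3 : ((LinearMap.id : Kk F n s →ₗ[F] _) ^ (p.2 : ℕ)) = LinearMap.id := by
    rw [← Module.End.one_eq_id, one_pow]
  rw [Module.End.mul_apply, xE, TensorProduct.map_pow, hE, TensorProduct.map_pow,
    LinearMap.pow_mulLeft, LinearMap.pow_mulLeft, ← hE1, h3, TensorProduct.map_tmul,
    TensorProduct.map_tmul]
  have h4 : E ((AdjoinRoot.root _ : Ll F n a) ^ (p.2 : ℕ) * 1) =
      algebraMap F (Ll F n a) (q⁻¹ ^ ((p.1 : ℕ) * (p.2 : ℕ))) *
        (AdjoinRoot.root _ : Ll F n a) ^ (p.2 : ℕ) := by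
    rw [mul_one, map_pow, hE2, mul_pow, ← map_pow, ← pow_mul]
  simp only [LinearMap.mulLeft_apply, LinearMap.id_apply, AlgHom.toLinearMap_apply]
  rw [h4, mul_one, bV, Module.Basis.tensorProduct_apply', bK_apply, bL_apply, ← Algebra.smul_def,
    TensorProduct.tmul_smul]

lemma B_li (hq1 : q ^ n = 1) : LinearIndependent F (B F n q s a) := by
  apply LinearIndependent.of_comp (Phi F n q s a hq1)
  have hq0 : q ≠ 0 := q_ne_zero F n hq1
  set u : Fin n × Fin n → Fˣ := fun p =>
    Units.mk0 (q⁻¹ ^ ((p.1 : ℕ) * (p.2 : ℕ))) (pow_ne_zero _ (inv_ne_zero hq0)) with hu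
  have h2 : ⇑((bV F n s a).unitsSMul u) = Phi F n q s a hq1 ∘ B F n q s a := by
    funext p
    rw [Module.Basis.unitsSMul_apply, Function.comp_apply, Phi_B]
    rfl
  rw [← h2]
  exact ((bV F n s a).unitsSMul u).linearIndependent

noncomputable def bE (hn : 2 ≤ n) (hq1 : q ^ n = 1) : Module.Basis (Fin n × Fin n) F (CE F n q s a) :=
  Module.Basis.mk (B_li F n q s a hq1) (B_span F n q s a hn)

lemma bE_apply (hn : 2 ≤ n) (hq1 : q ^ n = 1) (p : Fin n × Fin n) :
    bE F n q s a hn hq1 p = B F n q s a p := by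
  rw [bE, Module.Basis.mk_apply]

lemma CE_one_ne_zero (hn : 2 ≤ n) (hq1 : q ^ n = 1) : (1 : CE F n q s a) ≠ 0 := by
  have h := (bE F n q s a hn hq1).ne_zero (0, 0)
  rwa [bE_apply, B_zero] at h

lemma finrank_CE (hn : 2 ≤ n) (hq1 : q ^ n = 1) :
    Module.finrank F (CE F n q s a) = n ^ 2 := by
  rw [Module.finrank_eq_card_basis (bE F n q s a hn hq1)]
  simp [sq]


lemma Bp_mul_h (p : Fin n × Fin n) :
    B F n q s a p * CEh F n q s a = q ^ (p.2 : ℕ) • (CEh F n q s a * B F n q s a p) := by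
  unfold B
  rw [mul_assoc, show CEh F n q s a = CEh F n q s a ^ 1 from (pow_one _).symm, comm_pow,
    mul_one, pow_one, mul_smul_comm, ← mul_assoc, ← pow_succ]
  rw [← mul_assoc, ← pow_succ']

lemma x_mul_B (p : Fin n × Fin n) :
    CEx F n q s a * B F n q s a p = q ^ (p.1 : ℕ) • (B F n q s a p * CEx F n q s a) := by
  unfold B
  rw [← mul_assoc, show CEx F n q s a * CEh F n q s a ^ (p.1 : ℕ)
      = CEx F n q s a ^ 1 * CEh F n q s a ^ (p.1 : ℕ) from by rw [pow_one], comm_pow,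
    one_mul, pow_one, smul_mul_assoc, mul_assoc, mul_assoc, ← pow_succ, ← pow_succ']

noncomputable def Hi : CE F n q s a := s⁻¹ • CEh F n q s a ^ (n - 1)

noncomputable def Xi : CE F n q s a := a⁻¹ • CEx F n q s a ^ (n - 1)

lemma h_Hi (hs : s ≠ 0) : CEh F n q s a * Hi F n q s a = 1 := by
  rw [Hi, mul_smul_comm, ← pow_succ', Nat.sub_add_cancel (Nat.one_le_iff_ne_zero.mpr (NeZero.ne n)),
    rel2, Algebra.algebraMap_eq_smul_one, smul_smul, inv_mul_cancel₀ hs, one_smul]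

lemma Hi_h (hs : s ≠ 0) : Hi F n q s a * CEh F n q s a = 1 := by
  rw [Hi, smul_mul_assoc, ← pow_succ, Nat.sub_add_cancel (Nat.one_le_iff_ne_zero.mpr (NeZero.ne n)),
    rel2, Algebra.algebraMap_eq_smul_one, smul_smul, inv_mul_cancel₀ hs, one_smul]

lemma x_Xi (ha : a ≠ 0) : CEx F n q s a * Xi F n q s a = 1 := by
  rw [Xi, mul_smul_comm, ← pow_succ', Nat.sub_add_cancel (Nat.one_le_iff_ne_zero.mpr (NeZero.ne n)),
    rel3, Algebra.algebraMap_eq_smul_one, smul_smul, inv_mul_cancel₀ ha, one_smul]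

lemma Xi_x (ha : a ≠ 0) : Xi F n q s a * CEx F n q s a = 1 := by
  rw [Xi, smul_mul_assoc, ← pow_succ, Nat.sub_add_cancel (Nat.one_le_iff_ne_zero.mpr (NeZero.ne n)),
    rel3, Algebra.algebraMap_eq_smul_one, smul_smul, inv_mul_cancel₀ ha, one_smul]

noncomputable def NH : Module.End F (CE F n q s a) :=
  (LinearMap.mulRight F (Hi F n q s a)).comp (LinearMap.mulLeft F (CEh F n q s a))

noncomputable def NX : Module.End F (CE F n q s a) :=
  (LinearMap.mulRight F (Xi F n q s a)).comp (LinearMap.mulLeft F (CEx F n q s a))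

lemma NH_apply (z : CE F n q s a) : NH F n q s a z = CEh F n q s a * z * Hi F n q s a := rfl

lemma NX_apply (z : CE F n q s a) : NX F n q s a z = CEx F n q s a * z * Xi F n q s a := rfl

lemma h_mul_B (hq1 : q ^ n = 1) (p : Fin n × Fin n) :
    CEh F n q s a * B F n q s a p = q ^ (n - (p.2 : ℕ)) • (B F n q s a p * CEh F n q s a) := by
  rw [Bp_mul_h, smul_smul, ← pow_add, Nat.sub_add_cancel (le_of_lt p.2.isLt), hq1, one_smul]

lemma NH_diag (hn : 2 ≤ n) (hq1 : q ^ n = 1) (hs : s ≠ 0) (p : Fin n × Fin n) :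
    NH F n q s a (bE F n q s a hn hq1 p) =
      q ^ (n - (p.2 : ℕ)) • bE F n q s a hn hq1 p := by
  rw [NH_apply, bE_apply, h_mul_B F n q s a hq1, smul_mul_assoc, mul_assoc, h_Hi F n q s a hs,
    mul_one]

lemma NX_diag (hn : 2 ≤ n) (hq1 : q ^ n = 1) (ha : a ≠ 0) (p : Fin n × Fin n) :
    NX F n q s a (bE F n q s a hn hq1 p) = q ^ ((p.1 : ℕ)) • bE F n q s a hn hq1 p := by
  rw [NX_apply, bE_apply, x_mul_B, smul_mul_assoc, mul_assoc, x_Xi F n q s a ha, mul_one]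

lemma repr_diag (hn : 2 ≤ n) (hq1 : q ^ n = 1) (N : Module.End F (CE F n q s a))
    (w : Fin n × Fin n → F)
    (hN : ∀ p, N (bE F n q s a hn hq1 p) = w p • bE F n q s a hn hq1 p)
    (z : CE F n q s a) (p : Fin n × Fin n) :
    (bE F n q s a hn hq1).repr (N z) p = w p * (bE F n q s a hn hq1).repr z p := by
  set b := bE F n q s a hn hq1
  have key : ((Finsupp.lapply p : ((Fin n × Fin n) →₀ F) →ₗ[F] F)).comp
        ((b.repr : CE F n q s a →ₗ[F] _).comp N)
      = w p • ((Finsupp.lapply p : ((Fin n × Fin n) →₀ F) →ₗ[F] F)).comp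
        (b.repr : CE F n q s a →ₗ[F] _) := by
    refine b.ext fun p' => ?_
    simp only [LinearMap.comp_apply, LinearMap.smul_apply, LinearEquiv.coe_coe,
      Finsupp.lapply_apply, hN p', map_smul, Module.Basis.repr_self, Finsupp.smul_single,
      smul_eq_mul, mul_one]
    rcases eq_or_ne p' p with h | h
    · subst h; simp [Finsupp.single_apply]
    · simp [Finsupp.single_apply, h, Ne.symm h]
  have := DFunLike.congr_fun key z
  simpa using this

lemma repr_diag_pow (hn : 2 ≤ n) (hq1 : q ^ n = 1) (N : Module.End F (CE F n q s a))
    (w : Fin n × Fin n → F)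
    (hN : ∀ p, N (bE F n q s a hn hq1 p) = w p • bE F n q s a hn hq1 p)
    (r : ℕ) (z : CE F n q s a) (p : Fin n × Fin n) :
    (bE F n q s a hn hq1).repr ((N ^ r) z) p = w p ^ r * (bE F n q s a hn hq1).repr z p := by
  induction r with
  | zero => simp
  | succ r ih =>
    rw [pow_succ', Module.End.mul_apply, repr_diag F n q s a hn hq1 N w hN, ih, pow_succ',
      mul_assoc]


open Classical in
lemma geom_sum_of_root (u : F) (hu : u ^ n = 1) :
    ∑ r ∈ Finset.range n, u ^ r = if u = 1 then (n : F) else 0 := by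
  rcases eq_or_ne u 1 with h | h
  · subst h; simp
  · rw [if_neg h]
    have h2 := geom_sum_mul u n
    rw [hu, sub_self] at h2
    rcases mul_eq_zero.mp h2 with h3 | h3
    · exact h3
    · exact absurd (sub_eq_zero.mp h3) h

variable {n q} in
lemma nF_ne_zero (hq : IsPrimitiveRoot q n) (hn : 2 ≤ n) : (n : F) ≠ 0 := by
  rcases Nat.exists_eq_succ_of_ne_zero (by omega : n ≠ 0) with ⟨m, rfl⟩
  have h := hq.prod_one_sub_pow_eq_order
  have hne : ∀ k ∈ Finset.range m, (1 : F) - q ^ (k + 1) ≠ 0 := by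
    intro k hk
    refine sub_ne_zero_of_ne (Ne.symm (hq.pow_ne_one_of_pos_of_lt (Nat.succ_ne_zero k) ?_))
    simp at hk; omega
  have := Finset.prod_ne_zero_iff.mpr hne
  rw [h] at this
  push_cast
  exact this

open Classical in
lemma avg (hn : 2 ≤ n) (hq1 : q ^ n = 1) (hqn : (n : F) ≠ 0)
    (N : Module.End F (CE F n q s a)) (w : Fin n × Fin n → F)
    (hN : ∀ p, N (bE F n q s a hn hq1 p) = w p • bE F n q s a hn hq1 p)
    (hw : ∀ p, w p ^ n = 1)
    (I : TwoSidedIdeal (CE F n q s a)) (hNI : ∀ z ∈ I, N z ∈ I)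
    (z : CE F n q s a) (hz : z ∈ I) (p0 : Fin n × Fin n) :
    ∃ z', z' ∈ I ∧ ∀ p, (bE F n q s a hn hq1).repr z' p =
      if w p = w p0 then (bE F n q s a hn hq1).repr z p else 0 := by
  have hw0 : ∀ p, w p ≠ 0 := by
    intro p h
    have h2 := hw p
    rw [h, zero_pow (NeZero.ne n)] at h2
    exact zero_ne_one h2
  refine ⟨(n : F)⁻¹ • ∑ r ∈ Finset.range n, ((w p0)⁻¹) ^ r • (N ^ r) z, ?_, ?_⟩
  · have hNr : ∀ r : ℕ, (N ^ r) z ∈ I := by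
      intro r
      induction r with
      | zero => simpa using hz
      | succ r ih =>
        rw [pow_succ', Module.End.mul_apply]
        exact hNI _ ih
    rw [Algebra.smul_def]
    refine I.mul_mem_left _ _ (sum_mem fun r _ => ?_)
    rw [Algebra.smul_def]
    exact I.mul_mem_left _ _ (hNr r)
  · intro p
    have hrepr : (bE F n q s a hn hq1).repr
        ((n : F)⁻¹ • ∑ r ∈ Finset.range n, ((w p0)⁻¹) ^ r • (N ^ r) z) p
        = (n : F)⁻¹ * ∑ r ∈ Finset.range n, ((w p0)⁻¹ * w p) ^ r
            * (bE F n q s a hn hq1).repr z p := by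
      rw [map_smul, Finsupp.smul_apply, map_sum, Finsupp.finset_sum_apply, smul_eq_mul]
      congr 1
      refine Finset.sum_congr rfl fun r _ => ?_
      rw [map_smul, Finsupp.smul_apply, repr_diag_pow F n q s a hn hq1 N w hN, smul_eq_mul,
        mul_pow, mul_assoc]
    rw [hrepr, ← Finset.sum_mul,
      geom_sum_of_root F n ((w p0)⁻¹ * w p) (by rw [mul_pow, inv_pow, hw, hw, inv_one, one_mul])]
    rcases eq_or_ne (w p) (w p0) with h | h
    · rw [if_pos h, if_pos (by rw [h, inv_mul_cancel₀ (hw0 p0)]), ← mul_assoc,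
        inv_mul_cancel₀ hqn, one_mul]
    · rw [if_neg h, if_neg (fun h1 => h (((inv_mul_eq_one₀ (hw0 p0)).mp h1).symm)), zero_mul,
        mul_zero]


lemma Hi_pow_h_pow (hs : s ≠ 0) (i : ℕ) :
    Hi F n q s a ^ i * CEh F n q s a ^ i = 1 := by
  induction i with
  | zero => simp
  | succ i ih =>
    rw [pow_succ, pow_succ', mul_assoc, ← mul_assoc (Hi F n q s a), Hi_h F n q s a hs, one_mul,
      ih]

lemma x_pow_Xi_pow (ha : a ≠ 0) (j : ℕ) :
    CEx F n q s a ^ j * Xi F n q s a ^ j = 1 := by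
  induction j with
  | zero => simp
  | succ j ih =>
    rw [pow_succ, pow_succ', mul_assoc, ← mul_assoc (CEx F n q s a), x_Xi F n q s a ha, one_mul,
      ih]

variable {n q} in
open Classical in
lemma simple_of (hn : 2 ≤ n) (hq : IsPrimitiveRoot q n) (hs : s ≠ 0) (ha : a ≠ 0) :
    IsSimpleRing (CE F n q s a) := by
  have hq1 : q ^ n = 1 := hq.pow_eq_one
  have hqn : (n : F) ≠ 0 := nF_ne_zero F hq hn
  set b := bE F n q s a hn hq1 with hb
  have hone : (1 : CE F n q s a) ≠ 0 := CE_one_ne_zero F n q s a hn hq1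
  have hnt : (⊥ : TwoSidedIdeal (CE F n q s a)) ≠ ⊤ := by
    intro h
    have : (1 : CE F n q s a) ∈ (⊥ : TwoSidedIdeal (CE F n q s a)) := by
      rw [h]; exact TwoSidedIdeal.mem_top _
    exact hone ((TwoSidedIdeal.mem_bot _).mp this)
  haveI : Nontrivial (TwoSidedIdeal (CE F n q s a)) := ⟨⟨⊥, ⊤, hnt⟩⟩
  refine ⟨⟨fun I => ?_⟩⟩
  rcases eq_or_ne I ⊥ with hI | hI
  · exact Or.inl hI
  right
  have hex : ∃ z, z ∈ I ∧ z ≠ 0 := by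
    by_contra hc
    push_neg at hc
    apply hI
    refine TwoSidedIdeal.ext fun x => ⟨fun hx => (TwoSidedIdeal.mem_bot _).mpr (hc x hx),
      fun hx => ?_⟩
    rw [(TwoSidedIdeal.mem_bot _).mp hx]
    exact TwoSidedIdeal.zero_mem I
  obtain ⟨z, hz, hz0⟩ := hex
  have hc : b.repr z ≠ 0 := by
    intro hh
    exact hz0 (b.repr.injective (by rw [hh, map_zero]))
  obtain ⟨p0, hp0⟩ := Finsupp.ne_iff.mp hc
  rw [Finsupp.coe_zero, Pi.zero_apply] at hp0
  have hwH : ∀ p : Fin n × Fin n, (q ^ (n - (p.2 : ℕ))) ^ n = 1 := by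
    intro p
    rw [← pow_mul, mul_comm, pow_mul, hq1, one_pow]
  have hwX : ∀ p : Fin n × Fin n, (q ^ ((p.1 : ℕ))) ^ n = 1 := by
    intro p
    rw [← pow_mul, mul_comm, pow_mul, hq1, one_pow]
  obtain ⟨z1, hz1I, hz1⟩ := avg F n q s a hn hq1 hqn (NH F n q s a)
    (fun p => q ^ (n - (p.2 : ℕ))) (NH_diag F n q s a hn hq1 hs) hwH I
    (fun u hu => by
      rw [NH_apply]
      exact I.mul_mem_right _ _ (I.mul_mem_left _ _ hu)) z hz p0
  obtain ⟨z2, hz2I, hz2⟩ := avg F n q s a hn hq1 hqn (NX F n q s a)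
    (fun p => q ^ ((p.1 : ℕ))) (NX_diag F n q s a hn hq1 ha) hwX I
    (fun u hu => by
      rw [NX_apply]
      exact I.mul_mem_right _ _ (I.mul_mem_left _ _ hu)) z1 hz1I p0
  have hval : ∀ p, b.repr z2 p = if p = p0 then b.repr z p0 else 0 := by
    intro p
    rw [hz2 p]
    by_cases hp : p = p0
    · subst hp
      rw [if_pos rfl, if_pos rfl, hz1 p, if_pos rfl]
    · rw [if_neg hp]
      by_cases h1 : q ^ ((p.1 : ℕ)) = q ^ ((p0.1 : ℕ))
      · rw [if_pos h1, hz1 p]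
        have hp1 : p.1 = p0.1 := Fin.ext (hq.pow_inj p.1.isLt p0.1.isLt h1)
        by_cases h2 : q ^ (n - (p.2 : ℕ)) = q ^ (n - (p0.2 : ℕ))
        · exfalso
          apply hp
          have e2 := congrArg (· * q ^ ((p.2 : ℕ) + (p0.2 : ℕ))) h2
          simp only [← pow_add] at e2
          rw [show n - (p.2 : ℕ) + ((p.2 : ℕ) + (p0.2 : ℕ)) = n + (p0.2 : ℕ) by
              have := p.2.isLt; omega,
            show n - (p0.2 : ℕ) + ((p.2 : ℕ) + (p0.2 : ℕ)) = n + (p.2 : ℕ) by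
              have := p0.2.isLt; omega,
            pow_add, pow_add, hq1, one_mul, one_mul] at e2
          have hp2 : p.2 = p0.2 := Fin.ext (hq.pow_inj p.2.isLt p0.2.isLt e2.symm)
          exact Prod.ext hp1 hp2
        · rw [if_neg h2]
      · rw [if_neg h1]
  have hz2eq : z2 = b.repr z p0 • b p0 := by
    apply b.repr.injective
    ext p
    rw [map_smul, Finsupp.smul_apply, Module.Basis.repr_self, hval p]
    rcases eq_or_ne p p0 with h | h
    · subst h
      simp
    · rw [if_neg h, Finsupp.single_apply, if_neg (fun hh => h hh.symm), smul_zero]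
  have hmem1 : Hi F n q s a ^ ((p0.1 : ℕ)) * z2 * Xi F n q s a ^ ((p0.2 : ℕ)) ∈ I :=
    I.mul_mem_right _ _ (I.mul_mem_left _ _ hz2I)
  have heq1 : Hi F n q s a ^ ((p0.1 : ℕ)) * z2 * Xi F n q s a ^ ((p0.2 : ℕ))
      = b.repr z p0 • 1 := by
    rw [hz2eq, hb, bE_apply, B, mul_smul_comm, smul_mul_assoc]
    congr 1
    rw [← mul_assoc, Hi_pow_h_pow F n q s a hs, one_mul, x_pow_Xi_pow F n q s a ha]
  rw [heq1] at hmem1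
  have h1I : (1 : CE F n q s a) ∈ I := by
    have : (1 : CE F n q s a) = (b.repr z p0)⁻¹ • (b.repr z p0 • (1 : CE F n q s a)) := by
      rw [smul_smul, inv_mul_cancel₀ hp0, one_smul]
    rw [this, Algebra.smul_def]
    exact I.mul_mem_left _ _ hmem1
  exact (TwoSidedIdeal.one_mem_iff I).mp h1I

variable {n q} in
lemma center_eq (hn : 2 ≤ n) (hq : IsPrimitiveRoot q n) (hs : s ≠ 0) (ha : a ≠ 0) :
    Subalgebra.center F (CE F n q s a) = ⊥ := by
  have hq1 : q ^ n = 1 := hq.pow_eq_one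
  refine le_antisymm ?_ bot_le
  intro z hzc
  rw [Algebra.mem_bot]
  have hcomm := Subalgebra.mem_center_iff.mp hzc
  set b := bE F n q s a hn hq1 with hb
  have hNHz : NH F n q s a z = z := by
    rw [NH_apply, hcomm (CEh F n q s a), mul_assoc, h_Hi F n q s a hs, mul_one]
  have hNXz : NX F n q s a z = z := by
    rw [NX_apply, hcomm (CEx F n q s a), mul_assoc, x_Xi F n q s a ha, mul_one]
  have h1 : ∀ p, b.repr z p = q ^ (n - (p.2 : ℕ)) * b.repr z p := by
    intro p
    conv_lhs => rw [← hNHz]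
    exact repr_diag F n q s a hn hq1 (NH F n q s a) _ (NH_diag F n q s a hn hq1 hs) z p
  have h2 : ∀ p, b.repr z p = q ^ ((p.1 : ℕ)) * b.repr z p := by
    intro p
    conv_lhs => rw [← hNXz]
    exact repr_diag F n q s a hn hq1 (NX F n q s a) _ (NX_diag F n q s a hn hq1 ha) z p
  have hzero : ∀ p : Fin n × Fin n, p ≠ (0, 0) → b.repr z p = 0 := by
    intro p hp
    by_cases hp1 : p.1 = 0
    · have hp2 : p.2 ≠ 0 := fun h => hp (Prod.ext hp1 h)
      have hj : 0 < (p.2 : ℕ) := Nat.pos_of_ne_zero fun h => hp2 (Fin.ext h)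
      have hne1 : q ^ (n - (p.2 : ℕ)) ≠ 1 :=
        hq.pow_ne_one_of_pos_of_lt (by have := p.2.isLt; omega) (by have := p.2.isLt; omega)
      have h4 : (q ^ (n - (p.2 : ℕ)) - 1) * b.repr z p = 0 := by
        rw [sub_mul, one_mul, sub_eq_zero]
        exact (h1 p).symm
      rcases mul_eq_zero.mp h4 with h5 | h5
      · exact absurd (sub_eq_zero.mp h5) hne1
      · exact h5
    · have hi : 0 < (p.1 : ℕ) := Nat.pos_of_ne_zero fun h => hp1 (Fin.ext h)
      have hne1 : q ^ ((p.1 : ℕ)) ≠ 1 := hq.pow_ne_one_of_pos_of_lt hi.ne' p.1.isLt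
      have h4 : (q ^ ((p.1 : ℕ)) - 1) * b.repr z p = 0 := by
        rw [sub_mul, one_mul, sub_eq_zero]
        exact (h2 p).symm
      rcases mul_eq_zero.mp h4 with h5 | h5
      · exact absurd (sub_eq_zero.mp h5) hne1
      · exact h5
  refine ⟨b.repr z (0, 0), ?_⟩
  have hzeq : z = b.repr z (0, 0) • b (0, 0) := by
    apply b.repr.injective
    ext p
    rw [map_smul, Finsupp.smul_apply, Module.Basis.repr_self]
    rcases eq_or_ne p ((0, 0) : Fin n × Fin n) with h | h
    · subst h
      simp
    · rw [hzero p h, Finsupp.single_apply, if_neg (fun hh => h hh.symm), smul_zero]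
  conv_rhs => rw [hzeq]
  rw [hb, bE_apply, B_zero, Algebra.algebraMap_eq_smul_one]


open Classical in
lemma Brepr_ss (hn : 2 ≤ n) (hq1 : q ^ n = 1) (u v : Fin n × Fin n) (j : Fin n)
    (huv : (u.1 : ℕ) + (v.1 : ℕ) ≠ 0) :
    (bE F n q 0 a hn hq1).repr (B F n q 0 a u * B F n q 0 a v) (0, j) = 0 := by
  rw [B_mul]
  rcases lt_or_ge ((u.1 : ℕ) + (v.1 : ℕ)) n with hlt | hge
  · have hne : (u.1 + v.1 : Fin n) ≠ 0 := by
      intro hh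
      apply huv
      have h2 := congrArg Fin.val hh
      rw [Fin.add_def] at h2
      rw [← Nat.mod_eq_of_lt hlt]
      exact h2
    rw [← bE_apply F n q 0 a hn hq1 (u.1 + v.1, u.2 + v.2), map_smul, Finsupp.smul_apply,
      Module.Basis.repr_self, Finsupp.single_apply,
      if_neg (fun hh => hne (congrArg Prod.fst hh)), smul_zero]
  · have he1 : ((u.1 : ℕ) + (v.1 : ℕ)) / n = 1 := by
      have h2 := u.1.isLt
      have h3 := v.1.isLt
      refine Nat.div_eq_of_lt_le (by omega) (by omega)
    rw [he1, pow_one, mul_zero, zero_mul, zero_smul, map_zero, Finsupp.coe_zero,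
      Pi.zero_apply]

open Classical in
lemma Brepr_aa (hn : 2 ≤ n) (hq1 : q ^ n = 1) (u v : Fin n × Fin n) (i : Fin n)
    (huv : (u.2 : ℕ) + (v.2 : ℕ) ≠ 0) :
    (bE F n q s 0 hn hq1).repr (B F n q s 0 u * B F n q s 0 v) (i, 0) = 0 := by
  rw [B_mul]
  rcases lt_or_ge ((u.2 : ℕ) + (v.2 : ℕ)) n with hlt | hge
  · have hne : (u.2 + v.2 : Fin n) ≠ 0 := by
      intro hh
      apply huv
      have h2 := congrArg Fin.val hh
      rw [Fin.add_def] at h2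
      rw [← Nat.mod_eq_of_lt hlt]
      exact h2
    rw [← bE_apply F n q s 0 hn hq1 (u.1 + v.1, u.2 + v.2), map_smul, Finsupp.smul_apply,
      Module.Basis.repr_self, Finsupp.single_apply,
      if_neg (fun hh => hne (congrArg Prod.snd hh)), smul_zero]
  · have he2 : ((u.2 : ℕ) + (v.2 : ℕ)) / n = 1 := by
      have h2 := u.2.isLt
      have h3 := v.2.isLt
      refine Nat.div_eq_of_lt_le (by omega) (by omega)
    rw [he2, pow_one, mul_zero, zero_smul, map_zero, Finsupp.coe_zero, Pi.zero_apply]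


variable {n s} in
open Classical in
lemma not_simple_s (hn : 2 ≤ n) (hq1 : q ^ n = 1) (hs : s = 0) :
    ¬ IsSimpleRing (CE F n q s a) := by
  subst hs
  intro hsimp
  set b := bE F n q 0 a hn hq1 with hb
  set S : Set (CE F n q 0 a) := {z | ∀ j : Fin n, b.repr z (0, j) = 0} with hS
  have hmem : ∀ z, z ∈ S ↔ ∀ j : Fin n, b.repr z (0, j) = 0 := fun z => Iff.rfl
  have hleft : ∀ x z, z ∈ S → x * z ∈ S := by
    intro x z hz
    have hbasis : ∀ r : Fin n × Fin n, ∀ j : Fin n,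
        b.repr (B F n q 0 a r * z) (0, j) = 0 := by
      intro r j
      conv_lhs => rw [← b.linearCombination_repr z, Finsupp.linearCombination_apply]
      rw [Finsupp.sum, Finset.mul_sum, map_sum, Finsupp.finset_sum_apply]
      refine Finset.sum_eq_zero fun p hp => ?_
      have hcp : b.repr z p ≠ 0 := Finsupp.mem_support_iff.mp hp
      have hp1 : (p.1 : ℕ) ≠ 0 := by
        intro h0
        apply hcp
        rw [show p = ((0 : Fin n), p.2) from Prod.ext (Fin.ext h0) rfl]
        exact hz p.2
      rw [mul_smul_comm, map_smul, Finsupp.smul_apply, hb, bE_apply,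
        Brepr_ss F n q a hn hq1 r p j (by omega), smul_zero]
    intro j
    have key : ((Finsupp.lapply ((0, j) : Fin n × Fin n) :
          ((Fin n × Fin n) →₀ F) →ₗ[F] F).comp
        ((b.repr : CE F n q 0 a →ₗ[F] _).comp (LinearMap.mulRight F z))) = 0 := by
      refine b.ext fun r => ?_
      simp only [LinearMap.comp_apply, LinearMap.mulRight_apply, LinearEquiv.coe_coe,
        Finsupp.lapply_apply, LinearMap.zero_apply]
      rw [hb, bE_apply]
      exact hbasis r j
    have h2 := DFunLike.congr_fun key x
    simpa using h2
  have hright : ∀ x z, z ∈ S → z * x ∈ S := by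
    intro x z hz
    have hbasis : ∀ r : Fin n × Fin n, ∀ j : Fin n,
        b.repr (z * B F n q 0 a r) (0, j) = 0 := by
      intro r j
      conv_lhs => rw [← b.linearCombination_repr z, Finsupp.linearCombination_apply]
      rw [Finsupp.sum, Finset.sum_mul, map_sum, Finsupp.finset_sum_apply]
      refine Finset.sum_eq_zero fun p hp => ?_
      have hcp : b.repr z p ≠ 0 := Finsupp.mem_support_iff.mp hp
      have hp1 : (p.1 : ℕ) ≠ 0 := by
        intro h0
        apply hcp
        rw [show p = ((0 : Fin n), p.2) from Prod.ext (Fin.ext h0) rfl]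
        exact hz p.2
      rw [smul_mul_assoc, map_smul, Finsupp.smul_apply, hb, bE_apply,
        Brepr_ss F n q a hn hq1 p r j (by omega), smul_zero]
    intro j
    have key : ((Finsupp.lapply ((0, j) : Fin n × Fin n) :
          ((Fin n × Fin n) →₀ F) →ₗ[F] F).comp
        ((b.repr : CE F n q 0 a →ₗ[F] _).comp (LinearMap.mulLeft F z))) = 0 := by
      refine b.ext fun r => ?_
      simp only [LinearMap.comp_apply, LinearMap.mulLeft_apply, LinearEquiv.coe_coe,
        Finsupp.lapply_apply, LinearMap.zero_apply]
      rw [hb, bE_apply]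
      exact hbasis r j
    have h2 := DFunLike.congr_fun key x
    simpa using h2
  set J : TwoSidedIdeal (CE F n q 0 a) := TwoSidedIdeal.mk' S
    (fun j => by simp)
    (fun {x y} hx hy j => by rw [map_add, Finsupp.add_apply, hx j, hy j, add_zero])
    (fun {x} hx j => by rw [map_neg, Finsupp.neg_apply, hx j, neg_zero])
    (fun {x y} hy => hleft x y hy)
    (fun {x y} hx => hright y x hx) with hJdef
  have hone : ((1 : Fin n) : ℕ) = 1 := fin_val_one n hn
  rcases hsimp.simple.eq_bot_or_eq_top J with hJ | hJ
  · have h10 : ∀ j : Fin n, (((1 : Fin n), (0 : Fin n)) : Fin n × Fin n) ≠ (0, j) := by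
      intro j hh
      have h2 := congrArg Fin.val (congrArg Prod.fst hh)
      rw [hone] at h2
      simp at h2
    have hHJ : CEh F n q 0 a ∈ J := by
      rw [hJdef, TwoSidedIdeal.mem_mk']
      intro j
      rw [← B_h F n q 0 a hn, ← bE_apply F n q 0 a hn hq1, ← hb, Module.Basis.repr_self,
        Finsupp.single_apply, if_neg (h10 j)]
    rw [hJ] at hHJ
    have hzero := (TwoSidedIdeal.mem_bot _).mp hHJ
    have hH0 : CEh F n q 0 a ≠ 0 := by
      rw [← B_h F n q 0 a hn, ← bE_apply F n q 0 a hn hq1, ← hb]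
      exact b.ne_zero (1, 0)
    exact hH0 hzero
  · have h1J : (1 : CE F n q 0 a) ∈ J := hJ ▸ TwoSidedIdeal.mem_top _
    rw [hJdef, TwoSidedIdeal.mem_mk'] at h1J
    have h2 := h1J 0
    rw [← B_zero F n q 0 a, ← bE_apply F n q 0 a hn hq1, ← hb, Module.Basis.repr_self,
      Finsupp.single_apply, if_pos rfl] at h2
    exact one_ne_zero h2


variable {n a} in
open Classical in
lemma not_simple_a (hn : 2 ≤ n) (hq1 : q ^ n = 1) (ha : a = 0) :
    ¬ IsSimpleRing (CE F n q s a) := by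
  subst ha
  intro hsimp
  set b := bE F n q s 0 hn hq1 with hb
  set S : Set (CE F n q s 0) := {z | ∀ i : Fin n, b.repr z (i, 0) = 0} with hS
  have hleft : ∀ x z, z ∈ S → x * z ∈ S := by
    intro x z hz
    have hbasis : ∀ r : Fin n × Fin n, ∀ i : Fin n,
        b.repr (B F n q s 0 r * z) (i, 0) = 0 := by
      intro r i
      conv_lhs => rw [← b.linearCombination_repr z, Finsupp.linearCombination_apply]
      rw [Finsupp.sum, Finset.mul_sum, map_sum, Finsupp.finset_sum_apply]
      refine Finset.sum_eq_zero fun p hp => ?_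
      have hcp : b.repr z p ≠ 0 := Finsupp.mem_support_iff.mp hp
      have hp2 : (p.2 : ℕ) ≠ 0 := by
        intro h0
        apply hcp
        rw [show p = (p.1, (0 : Fin n)) from Prod.ext rfl (Fin.ext h0)]
        exact hz p.1
      rw [mul_smul_comm, map_smul, Finsupp.smul_apply, hb, bE_apply,
        Brepr_aa F n q s hn hq1 r p i (by omega), smul_zero]
    intro i
    have key : ((Finsupp.lapply ((i, 0) : Fin n × Fin n) :
          ((Fin n × Fin n) →₀ F) →ₗ[F] F).comp
        ((b.repr : CE F n q s 0 →ₗ[F] _).comp (LinearMap.mulRight F z))) = 0 := by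
      refine b.ext fun r => ?_
      simp only [LinearMap.comp_apply, LinearMap.mulRight_apply, LinearEquiv.coe_coe,
        Finsupp.lapply_apply, LinearMap.zero_apply]
      rw [hb, bE_apply]
      exact hbasis r i
    have h2 := DFunLike.congr_fun key x
    simpa using h2
  have hright : ∀ x z, z ∈ S → z * x ∈ S := by
    intro x z hz
    have hbasis : ∀ r : Fin n × Fin n, ∀ i : Fin n,
        b.repr (z * B F n q s 0 r) (i, 0) = 0 := by
      intro r i
      conv_lhs => rw [← b.linearCombination_repr z, Finsupp.linearCombination_apply]
      rw [Finsupp.sum, Finset.sum_mul, map_sum, Finsupp.finset_sum_apply]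
      refine Finset.sum_eq_zero fun p hp => ?_
      have hcp : b.repr z p ≠ 0 := Finsupp.mem_support_iff.mp hp
      have hp2 : (p.2 : ℕ) ≠ 0 := by
        intro h0
        apply hcp
        rw [show p = (p.1, (0 : Fin n)) from Prod.ext rfl (Fin.ext h0)]
        exact hz p.1
      rw [smul_mul_assoc, map_smul, Finsupp.smul_apply, hb, bE_apply,
        Brepr_aa F n q s hn hq1 p r i (by omega), smul_zero]
    intro i
    have key : ((Finsupp.lapply ((i, 0) : Fin n × Fin n) :
          ((Fin n × Fin n) →₀ F) →ₗ[F] F).comp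
        ((b.repr : CE F n q s 0 →ₗ[F] _).comp (LinearMap.mulLeft F z))) = 0 := by
      refine b.ext fun r => ?_
      simp only [LinearMap.comp_apply, LinearMap.mulLeft_apply, LinearEquiv.coe_coe,
        Finsupp.lapply_apply, LinearMap.zero_apply]
      rw [hb, bE_apply]
      exact hbasis r i
    have h2 := DFunLike.congr_fun key x
    simpa using h2
  set J : TwoSidedIdeal (CE F n q s 0) := TwoSidedIdeal.mk' S
    (fun i => by simp)
    (fun {x y} hx hy i => by rw [map_add, Finsupp.add_apply, hx i, hy i, add_zero])
    (fun {x} hx i => by rw [map_neg, Finsupp.neg_apply, hx i, neg_zero])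
    (fun {x y} hy => hleft x y hy)
    (fun {x y} hx => hright y x hx) with hJdef
  have hone : ((1 : Fin n) : ℕ) = 1 := fin_val_one n hn
  rcases hsimp.simple.eq_bot_or_eq_top J with hJ | hJ
  · have h01 : ∀ i : Fin n, (((0 : Fin n), (1 : Fin n)) : Fin n × Fin n) ≠ (i, 0) := by
      intro i hh
      have h2 := congrArg Fin.val (congrArg Prod.snd hh)
      rw [hone] at h2
      simp at h2
    have hXJ : CEx F n q s 0 ∈ J := by
      rw [hJdef, TwoSidedIdeal.mem_mk']
      intro i
      rw [← B_x F n q s 0 hn, ← bE_apply F n q s 0 hn hq1, ← hb, Module.Basis.repr_self,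
        Finsupp.single_apply, if_neg (h01 i)]
    rw [hJ] at hXJ
    have hzero := (TwoSidedIdeal.mem_bot _).mp hXJ
    have hX0 : CEx F n q s 0 ≠ 0 := by
      rw [← B_x F n q s 0 hn, ← bE_apply F n q s 0 hn hq1, ← hb]
      exact b.ne_zero (0, 1)
    exact hX0 hzero
  · have h1J : (1 : CE F n q s 0) ∈ J := hJ ▸ TwoSidedIdeal.mem_top _
    rw [hJdef, TwoSidedIdeal.mem_mk'] at h1J
    have h2 := h1J 0
    rw [← B_zero F n q s 0, ← bE_apply F n q s 0 hn hq1, ← hb, Module.Basis.repr_self,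
      Finsupp.single_apply, if_pos rfl] at h2
    exact one_ne_zero h2

end CEProof

/-- Let `F` be a field, `n ≥ 2`, `q ∈ F` a primitive `n`-th root of unity,
`s, a ∈ F`. Then `𝓔 = (E(s), σ, a)` is a simple ring iff `s ≠ 0` and `a ≠ 0`; moreover if
`s ≠ 0` and `a ≠ 0` then `𝓔` is a central simple `F`-algebra of degree `n`: its center is
`F·1` and `dim_F 𝓔 = n²`. -/
theorem stmt_2 (F : Type) [Field F] (n : ℕ) (hn : 2 ≤ n) (q : F)
    (hq : IsPrimitiveRoot q n) (s a : F) :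
    (IsSimpleRing (CE F n q s a) ↔ s ≠ 0 ∧ a ≠ 0) ∧
    (s ≠ 0 → a ≠ 0 →
      Subalgebra.center F (CE F n q s a) = ⊥ ∧
      Module.finrank F (CE F n q s a) = n ^ 2) := by
  haveI : NeZero n := ⟨by omega⟩
  have hq1 : q ^ n = 1 := hq.pow_eq_one
  refine ⟨⟨fun hsimp => ⟨fun hs0 => ?_, fun ha0 => ?_⟩, fun h => ?_⟩, fun hs ha => ?_⟩
  · exact CEProof.not_simple_s F q a hn hq1 hs0 hsimp
  · exact CEProof.not_simple_a F q s hn hq1 ha0 hsimp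
  · exact CEProof.simple_of F s a hn hq h.1 h.2
  · exact ⟨CEProof.center_eq F s a hn hq hs ha, CEProof.finrank_CE F n q s a hn hq1⟩
end

section
/- Let F be a field, n ≥ 2, q ∈ F a primitive n-th root of unity, and s, a ∈ F, and let 𝓔 = (E(s), σ, a) be the F-algebra generated by h and x subject to x·h = q·h·x, h^n = s, x^n = a. Then: (i) if s ≠ 0 and a = 0, the Jacobson radical of 𝓔 is the two-sided ideal generated by x, and 𝓔 modulo its Jacobson radical is isomorphic as an F-algebra to F[X]/(X^n − s); (ii) if s = 0 and a ≠ 0, the Jacobson radical of 𝓔 is the two-sided ideal generated by h, and 𝓔 modulo its Jacobson radical is isomorphic to F[X]/(X^n − a); (iii) if s = 0 and a = 0, the Jacobson radical of 𝓔 is the two-sided ideal generated by x and h, and 𝓔 modulo its Jacobson radical is isomorphic to F. -/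
open Polynomial

/-- The Jacobson radical of a ring `R`, as a set: the intersection of the annihilators of all
simple left `R`-modules. -/
def jacobsonRadicalSet (R : Type) [Ring R] : Set R :=
  {r : R | ∀ (M : Type) (_ : AddCommGroup M) (_ : Module R M),
    IsSimpleModule R M → ∀ m : M, r • m = 0}

section helper

variable (F : Type) [Field F] (n : ℕ) (q s a : F)

lemma CE_comm : CEx F n q s a * CEh F n q s a =
    algebraMap F (CE F n q s a) q * (CEh F n q s a * CEx F n q s a) := by
  have h := RingQuot.mkAlgHom_rel F (@CERel.comm F _ n q s a)
  simp only [map_mul, AlgHom.commutes] at h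
  simpa [CEh, CEx] using h

lemma CE_hpow : CEh F n q s a ^ n = algebraMap F (CE F n q s a) s := by
  have h := RingQuot.mkAlgHom_rel F (@CERel.hpow F _ n q s a)
  simp only [map_pow, AlgHom.commutes] at h
  simpa [CEh] using h

lemma CE_xpow : CEx F n q s a ^ n = algebraMap F (CE F n q s a) a := by
  have h := RingQuot.mkAlgHom_rel F (@CERel.xpow F _ n q s a)
  simp only [map_pow, AlgHom.commutes] at h
  simpa [CEx] using h

lemma CE_normal (z : CE F n q s a)
    (hh : ∃ c, z * CEh F n q s a = c * z) (hx : ∃ c, z * CEx F n q s a = c * z) :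
    ∀ e : CE F n q s a, ∃ e', z * e = e' * z := by
  intro e
  obtain ⟨w, rfl⟩ := RingQuot.mkAlgHom_surjective F _ e
  induction w using FreeAlgebra.induction with
  | grade0 r =>
    refine ⟨RingQuot.mkAlgHom F _ (algebraMap F _ r), ?_⟩
    rw [AlgHom.commutes]
    exact (Algebra.commutes r z).symm
  | grade1 i =>
    fin_cases i
    · exact hh
    · exact hx
  | mul w1 w2 ih1 ih2 =>
    obtain ⟨c1, hc1⟩ := ih1
    obtain ⟨c2, hc2⟩ := ih2
    refine ⟨c1 * c2, ?_⟩
    rw [map_mul, ← mul_assoc, hc1, mul_assoc, hc2, ← mul_assoc]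
  | add w1 w2 ih1 ih2 =>
    obtain ⟨c1, hc1⟩ := ih1
    obtain ⟨c2, hc2⟩ := ih2
    refine ⟨c1 + c2, ?_⟩
    rw [map_add, mul_add, hc1, hc2, add_mul]

lemma CE_kill (z : CE F n q s a) (hz : z ^ n = 0)
    (hnorm : ∀ e : CE F n q s a, ∃ e', z * e = e' * z)
    (M : Type) [AddCommGroup M] [Module (CE F n q s a) M]
    (hM : IsSimpleModule (CE F n q s a) M) :
    ∀ m : M, z • m = 0 := by
  classical
  set N : Submodule (CE F n q s a) M :=
    { carrier := {m | z • m = 0}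
      add_mem' := fun {m1} {m2} h1 h2 => by
        show z • (m1 + m2) = 0
        rw [smul_add, h1, h2, add_zero]
      zero_mem' := smul_zero z
      smul_mem' := fun r m hm => by
        obtain ⟨r', hr⟩ := hnorm r
        show z • (r • m) = 0
        rw [← mul_smul, hr, mul_smul, hm, smul_zero] } with hN
  rcases hM.eq_bot_or_eq_top N with hbot | htop
  · exfalso
    have hnt : Nontrivial M := IsSimpleModule.nontrivial (CE F n q s a) M
    obtain ⟨m₀, hm₀⟩ := exists_ne (0 : M)
    have key : ∀ k : ℕ, z ^ k • m₀ ≠ 0 := by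
      intro k
      induction k with
      | zero => simpa
      | succ k ih =>
        intro hc
        have hmem : z ^ k • m₀ ∈ N := by
          show z • (z ^ k • m₀) = 0
          rw [← mul_smul, ← pow_succ']
          exact hc
        rw [hbot] at hmem
        exact ih (by simpa using hmem)
    exact key n (by rw [hz, zero_smul])
  · intro m
    have : m ∈ N := htop ▸ Submodule.mem_top
    exact this

lemma span_killed {R : Type} [Ring R] (T : Set R) (M : Type) [AddCommGroup M] [Module R M]
    (hT : ∀ z ∈ T, ∀ m : M, z • m = 0) :
    ∀ r ∈ TwoSidedIdeal.span T, ∀ m : M, r • m = 0 := by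
  intro r hr m
  have hker : r ∈ TwoSidedIdeal.ker (Module.toAddMonoidEnd R M) := by
    refine TwoSidedIdeal.mem_span_iff.mp hr _ ?_
    intro zz hz
    rw [SetLike.mem_coe, TwoSidedIdeal.mem_ker _]
    refine DFunLike.ext _ _ fun m' => ?_
    show zz • m' = (0 : AddMonoid.End M) m'
    simpa using hT zz hz m'
  have h0 := (TwoSidedIdeal.mem_ker _).mp hker
  have : r • m = (Module.toAddMonoidEnd R M r) m := rfl
  rw [this, h0]
  rfl

lemma span_le_ker {R S' : Type} [Ring R] [Ring S'] (f : R →+* S') (T : Set R)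
    (hT : ∀ z ∈ T, f z = 0) : ∀ v ∈ TwoSidedIdeal.span T, f v = 0 := fun v hv =>
  (TwoSidedIdeal.mem_ker _).mp (TwoSidedIdeal.mem_span_iff.mp hv _ fun z hz =>
    (TwoSidedIdeal.mem_ker _).mpr (hT z hz))

lemma CE_decomp (z : CE F n q s a) (T : Set (CE F n q s a))
    (h0 : CEh F n q s a = z ∨ CEh F n q s a ∈ TwoSidedIdeal.span T)
    (h1 : CEx F n q s a = z ∨ CEx F n q s a ∈ TwoSidedIdeal.span T) :
    ∀ e : CE F n q s a, ∃ (p : F[X]) (v : CE F n q s a),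
      v ∈ TwoSidedIdeal.span T ∧ e = aeval z p + v := by
  intro e
  obtain ⟨w, rfl⟩ := RingQuot.mkAlgHom_surjective F _ e
  induction w using FreeAlgebra.induction with
  | grade0 r =>
    refine ⟨C r, 0, TwoSidedIdeal.zero_mem _, ?_⟩
    rw [aeval_C, add_zero, AlgHom.commutes]
  | grade1 i =>
    fin_cases i
    · rcases h0 with hz | hm
      · exact ⟨X, 0, TwoSidedIdeal.zero_mem _, by rw [aeval_X, add_zero, ← hz]; rfl⟩
      · exact ⟨0, CEh F n q s a, hm, by rw [map_zero, zero_add]; rfl⟩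
    · rcases h1 with hz | hm
      · exact ⟨X, 0, TwoSidedIdeal.zero_mem _, by rw [aeval_X, add_zero, ← hz]; rfl⟩
      · exact ⟨0, CEx F n q s a, hm, by rw [map_zero, zero_add]; rfl⟩
  | mul w1 w2 ih1 ih2 =>
    obtain ⟨p1, v1, hv1, e1⟩ := ih1
    obtain ⟨p2, v2, hv2, e2⟩ := ih2
    refine ⟨p1 * p2, aeval z p1 * v2 + v1 * aeval z p2 + v1 * v2,
      TwoSidedIdeal.add_mem _ (TwoSidedIdeal.add_mem _
        (TwoSidedIdeal.mul_mem_left _ _ _ hv2) (TwoSidedIdeal.mul_mem_right _ _ _ hv1))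
        (TwoSidedIdeal.mul_mem_right _ _ _ hv1), ?_⟩
    rw [map_mul, e1, e2, map_mul]
    noncomm_ring
  | add w1 w2 ih1 ih2 =>
    obtain ⟨p1, v1, hv1, e1⟩ := ih1
    obtain ⟨p2, v2, hv2, e2⟩ := ih2
    refine ⟨p1 + p2, v1 + v2, TwoSidedIdeal.add_mem _ hv1 hv2, ?_⟩
    rw [map_add, e1, e2, map_add]
    abel

lemma simple_module_of_surj {R K : Type} [Ring R] [DivisionRing K] (φ : R →+* K)
    (hφ : Function.Surjective φ) :
    @IsSimpleModule R _ K _ (Module.compHom K φ) := by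
  letI := Module.compHom K φ
  have hsmul : ∀ (r : R) (k : K), r • k = φ r * k := fun r k => rfl
  have hnt : Nontrivial (Submodule R K) := by
    refine ⟨⊥, ⊤, fun hbt => ?_⟩
    have h1 : (1 : K) ∈ (⊥ : Submodule R K) := hbt ▸ Submodule.mem_top
    simp at h1
  refine { toNontrivial := hnt, eq_bot_or_eq_top := fun N => ?_ }
  rcases eq_or_ne N ⊥ with h | h
  · exact Or.inl h
  · right
    obtain ⟨k, hkN, hk0⟩ := (Submodule.ne_bot_iff N).mp h
    rw [Submodule.eq_top_iff']
    intro y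
    obtain ⟨r, hr⟩ := hφ (y * k⁻¹)
    have := N.smul_mem r hkN
    rwa [hsmul, hr, mul_assoc, inv_mul_cancel₀ hk0, mul_one] at this

lemma root_pow_eq (b : F) :
    (AdjoinRoot.root (X ^ n - C b : F[X])) ^ n =
      algebraMap F (AdjoinRoot (X ^ n - C b : F[X])) b := by
  have h := AdjoinRoot.mk_self (f := (X ^ n - C b : F[X]))
  rw [map_sub, map_pow, AdjoinRoot.mk_X, AdjoinRoot.mk_C, sub_eq_zero] at h
  exact h

lemma adjoin_mem_max_eq_zero (b : F) (hb : b ≠ 0) (hnF : (n : F) ≠ 0) (hn0 : n ≠ 0)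
    (y : AdjoinRoot (X ^ n - C b : F[X]))
    (hy : ∀ m : Ideal (AdjoinRoot (X ^ n - C b : F[X])), m.IsMaximal → y ∈ m) : y = 0 := by
  have hmonic : (X ^ n - C b : F[X]).Monic := monic_X_pow_sub_C b hn0
  haveI : Module.Finite F (AdjoinRoot (X ^ n - C b : F[X])) :=
    Module.Finite.of_basis (AdjoinRoot.powerBasis hmonic.ne_zero).basis
  haveI : IsArtinianRing (AdjoinRoot (X ^ n - C b : F[X])) := IsArtinianRing.of_finite F _
  have hsq : Squarefree (X ^ n - C b : F[X]) := (separable_X_pow_sub_C b hnF hb).squarefree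
  haveI : IsReduced (AdjoinRoot (X ^ n - C b : F[X])) := by
    refine ⟨fun z hz => ?_⟩
    obtain ⟨g, rfl⟩ := AdjoinRoot.mk_surjective z
    obtain ⟨k, hk⟩ := hz
    rcases Nat.eq_zero_or_pos k with rfl | hkpos
    · rw [pow_zero] at hk
      haveI := subsingleton_of_zero_eq_one hk.symm
      exact Subsingleton.elim _ _
    · rw [← map_pow, AdjoinRoot.mk_eq_zero] at hk
      exact AdjoinRoot.mk_eq_zero.mpr ((hsq.dvd_pow_iff_dvd hkpos.ne').mp hk)
  have hJ : y ∈ Ideal.jacobson (⊥ : Ideal (AdjoinRoot (X ^ n - C b : F[X]))) := by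
    rw [Ideal.jacobson]
    exact Ideal.mem_sInf.mpr fun {J} hJ => hy J hJ.2
  obtain ⟨k, hk⟩ := IsArtinianRing.isNilpotent_jacobson_bot
    (R := AdjoinRoot (X ^ n - C b : F[X]))
  have hyk : y ^ k = 0 := by
    have h2 := Ideal.pow_mem_pow hJ k
    rw [hk] at h2
    simpa using h2
  exact IsNilpotent.eq_zero ⟨k, hyk⟩

end helper


section homs

variable (F : Type) [Field F] (n : ℕ) (q s a : F)

noncomputable def CEf1 (hn : n ≠ 0) : CE F n q s 0 →ₐ[F] AdjoinRoot (X ^ n - C s : F[X]) :=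
  RingQuot.liftAlgHom F ⟨FreeAlgebra.lift F ![AdjoinRoot.root _, 0], by
    intro x y hxy
    induction hxy with
    | comm => simp
    | hpow => simp [root_pow_eq]
    | xpow => simp [zero_pow hn]⟩

lemma CEf1_h (hn : n ≠ 0) :
    CEf1 F n q s hn (CEh F n q s 0) = AdjoinRoot.root (X ^ n - C s : F[X]) := by
  show CEf1 F n q s hn (RingQuot.mkAlgHom F _ (FreeAlgebra.ι F (0 : Fin 2))) = _
  rw [CEf1, RingQuot.liftAlgHom_mkAlgHom_apply]
  simp

lemma CEf1_x (hn : n ≠ 0) : CEf1 F n q s hn (CEx F n q s 0) = 0 := by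
  show CEf1 F n q s hn (RingQuot.mkAlgHom F _ (FreeAlgebra.ι F (1 : Fin 2))) = _
  rw [CEf1, RingQuot.liftAlgHom_mkAlgHom_apply]
  simp

noncomputable def CEf2 (hn : n ≠ 0) : CE F n q 0 a →ₐ[F] AdjoinRoot (X ^ n - C a : F[X]) :=
  RingQuot.liftAlgHom F ⟨FreeAlgebra.lift F ![0, AdjoinRoot.root _], by
    intro x y hxy
    induction hxy with
    | comm => simp
    | hpow => simp [zero_pow hn]
    | xpow => simp [root_pow_eq]⟩

lemma CEf2_h (hn : n ≠ 0) : CEf2 F n q a hn (CEh F n q 0 a) = 0 := by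
  show CEf2 F n q a hn (RingQuot.mkAlgHom F _ (FreeAlgebra.ι F (0 : Fin 2))) = _
  rw [CEf2, RingQuot.liftAlgHom_mkAlgHom_apply]
  simp

lemma CEf2_x (hn : n ≠ 0) :
    CEf2 F n q a hn (CEx F n q 0 a) = AdjoinRoot.root (X ^ n - C a : F[X]) := by
  show CEf2 F n q a hn (RingQuot.mkAlgHom F _ (FreeAlgebra.ι F (1 : Fin 2))) = _
  rw [CEf2, RingQuot.liftAlgHom_mkAlgHom_apply]
  simp

noncomputable def CEf3 (hn : n ≠ 0) : CE F n q 0 0 →ₐ[F] F :=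
  RingQuot.liftAlgHom F ⟨FreeAlgebra.lift F ![0, 0], by
    intro x y hxy
    induction hxy with
    | comm => simp
    | hpow => simp [zero_pow hn]
    | xpow => simp [zero_pow hn]⟩

lemma CEf3_h (hn : n ≠ 0) : CEf3 F n q hn (CEh F n q 0 0) = 0 := by
  show CEf3 F n q hn (RingQuot.mkAlgHom F _ (FreeAlgebra.ι F (0 : Fin 2))) = _
  rw [CEf3, RingQuot.liftAlgHom_mkAlgHom_apply]
  simp

lemma CEf3_x (hn : n ≠ 0) : CEf3 F n q hn (CEx F n q 0 0) = 0 := by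
  show CEf3 F n q hn (RingQuot.mkAlgHom F _ (FreeAlgebra.ι F (1 : Fin 2))) = _
  rw [CEf3, RingQuot.liftAlgHom_mkAlgHom_apply]
  simp

end homs


/-- With `𝓔 = (E(s), σ, a)` as above:
(i) if `s ≠ 0` and `a = 0`, the Jacobson radical of `𝓔` is the two-sided ideal generated by
`x`, and `𝓔` modulo its Jacobson radical is `F`-algebra isomorphic to `F[X]/(X^n − s)`
(expressed via a surjective `F`-algebra homomorphism whose kernel is the radical);
(ii) if `s = 0` and `a ≠ 0`, the Jacobson radical is the two-sided ideal generated by `h` and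
the quotient is isomorphic to `F[X]/(X^n − a)`;
(iii) if `s = 0` and `a = 0`, the Jacobson radical is the two-sided ideal generated by `x` and
`h`, and the quotient is isomorphic to `F`. -/
theorem stmt_3 (F : Type) [Field F] (n : ℕ) (hn : 2 ≤ n) (q : F)
    (hq : IsPrimitiveRoot q n) (s a : F) :
    (s ≠ 0 → a = 0 →
      jacobsonRadicalSet (CE F n q s a) =
        ((TwoSidedIdeal.span {CEx F n q s a} : TwoSidedIdeal (CE F n q s a)) :
          Set (CE F n q s a)) ∧
      ∃ f : CE F n q s a →ₐ[F] AdjoinRoot (X ^ n - C s : F[X]),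
        Function.Surjective f ∧
        ∀ r : CE F n q s a, f r = 0 ↔ r ∈ jacobsonRadicalSet (CE F n q s a)) ∧
    (s = 0 → a ≠ 0 →
      jacobsonRadicalSet (CE F n q s a) =
        ((TwoSidedIdeal.span {CEh F n q s a} : TwoSidedIdeal (CE F n q s a)) :
          Set (CE F n q s a)) ∧
      ∃ f : CE F n q s a →ₐ[F] AdjoinRoot (X ^ n - C a : F[X]),
        Function.Surjective f ∧
        ∀ r : CE F n q s a, f r = 0 ↔ r ∈ jacobsonRadicalSet (CE F n q s a)) ∧
    (s = 0 → a = 0 →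
      jacobsonRadicalSet (CE F n q s a) =
        ((TwoSidedIdeal.span {CEx F n q s a, CEh F n q s a} :
          TwoSidedIdeal (CE F n q s a)) : Set (CE F n q s a)) ∧
      ∃ f : CE F n q s a →ₐ[F] F,
        Function.Surjective f ∧
        ∀ r : CE F n q s a, f r = 0 ↔ r ∈ jacobsonRadicalSet (CE F n q s a)) := by
  have hn0 : n ≠ 0 := by omega
  have hq1 : q ^ n = 1 := hq.pow_eq_one
  have hq0 : q ≠ 0 := by
    intro h
    rw [h, zero_pow hn0] at hq1
    exact zero_ne_one hq1
  have hnF : (n : F) ≠ 0 := by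
    haveI : NeZero n := ⟨hn0⟩
    exact hq.neZero'.out
  refine ⟨?_, ?_, ?_⟩
  -- ### Case (i)
  · intro hs ha
    subst ha
    have hxn : CEx F n q s 0 ^ n = 0 := by rw [CE_xpow]; simp
    have hxnorm : ∀ e : CE F n q s 0, ∃ e', CEx F n q s 0 * e = e' * CEx F n q s 0 :=
      CE_normal F n q s 0 _
        ⟨algebraMap F _ q * CEh F n q s 0, by rw [CE_comm, mul_assoc]⟩
        ⟨CEx F n q s 0, rfl⟩
    have span_rad : ∀ r ∈ TwoSidedIdeal.span {CEx F n q s 0},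
        r ∈ jacobsonRadicalSet (CE F n q s 0) := by
      intro r hr M iM1 iM2 hM m
      refine span_killed {CEx F n q s 0} M (fun z hz m' => ?_) r hr m
      rw [Set.mem_singleton_iff] at hz
      rw [hz]
      exact CE_kill F n q s 0 _ hxn hxnorm M hM m'
    have hfsurj : Function.Surjective (CEf1 F n q s hn0) := by
      intro y
      obtain ⟨p, rfl⟩ := AdjoinRoot.mk_surjective y
      refine ⟨aeval (CEh F n q s 0) p, ?_⟩
      rw [← Polynomial.aeval_algHom_apply, CEf1_h, AdjoinRoot.aeval_eq]
    have ker_span : ∀ e, CEf1 F n q s hn0 e = 0 →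
        e ∈ TwoSidedIdeal.span {CEx F n q s 0} := by
      intro e hfe
      obtain ⟨p, v, hv, rfl⟩ := CE_decomp F n q s 0 (CEh F n q s 0) {CEx F n q s 0}
        (Or.inl rfl) (Or.inr (TwoSidedIdeal.subset_span (Set.mem_singleton _))) e
      have hfv : CEf1 F n q s hn0 v = 0 := by
        refine span_le_ker (CEf1 F n q s hn0).toRingHom _ (fun z hz => ?_) v hv
        rw [Set.mem_singleton_iff] at hz
        rw [hz]
        exact CEf1_x F n q s hn0
      rw [map_add, hfv, add_zero, ← Polynomial.aeval_algHom_apply, CEf1_h,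
        AdjoinRoot.aeval_eq, AdjoinRoot.mk_eq_zero] at hfe
      obtain ⟨t, ht⟩ := hfe
      have hz : aeval (CEh F n q s 0) p = 0 := by
        rw [ht, map_mul, map_sub, map_pow, aeval_X, aeval_C, CE_hpow, sub_self, zero_mul]
      rw [hz, zero_add]
      exact hv
    have rad_ker : ∀ r ∈ jacobsonRadicalSet (CE F n q s 0), CEf1 F n q s hn0 r = 0 := by
      intro r hr
      apply adjoin_mem_max_eq_zero F n s hs hnF hn0
      intro m hm
      haveI := hm
      letI : Field (AdjoinRoot (X ^ n - C s : F[X]) ⧸ m) := Ideal.Quotient.field m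
      set φ : CE F n q s 0 →+* (AdjoinRoot (X ^ n - C s : F[X]) ⧸ m) :=
        (Ideal.Quotient.mk m).comp (CEf1 F n q s hn0).toRingHom with hφdef
      have hφsurj : Function.Surjective φ := by
        have hco : ⇑φ = (Ideal.Quotient.mk m) ∘ (CEf1 F n q s hn0) := rfl
        rw [hco]
        exact (Ideal.Quotient.mk_surjective).comp hfsurj
      letI : Module (CE F n q s 0) (AdjoinRoot (X ^ n - C s : F[X]) ⧸ m) :=
        Module.compHom _ φ
      have hsim := simple_module_of_surj φ hφsurj
      have h1 := hr _ _ _ hsim (1 : (AdjoinRoot (X ^ n - C s : F[X]) ⧸ m))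
      have h2 : φ r * 1 = 0 := h1
      rw [mul_one] at h2
      exact Ideal.Quotient.eq_zero_iff_mem.mp h2
    refine ⟨subset_antisymm (fun r hr => ker_span r (rad_ker r hr))
      (fun r hr => span_rad r hr), CEf1 F n q s hn0, hfsurj, fun r =>
      ⟨fun h0 => span_rad r (ker_span r h0), fun hr => rad_ker r hr⟩⟩
  -- ### Case (ii)
  · intro hs ha
    subst hs
    have hhn : CEh F n q 0 a ^ n = 0 := by rw [CE_hpow]; simp
    have hhnorm : ∀ e : CE F n q 0 a, ∃ e', CEh F n q 0 a * e = e' * CEh F n q 0 a := by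
      refine CE_normal F n q 0 a _ ⟨CEh F n q 0 a, rfl⟩
        ⟨algebraMap F _ q⁻¹ * CEx F n q 0 a, ?_⟩
      have h2 : algebraMap F (CE F n q 0 a) q⁻¹ * (CEx F n q 0 a * CEh F n q 0 a) =
          CEh F n q 0 a * CEx F n q 0 a := by
        rw [CE_comm, ← mul_assoc, ← map_mul, inv_mul_cancel₀ hq0, map_one, one_mul]
      rw [mul_assoc, h2]
    have span_rad : ∀ r ∈ TwoSidedIdeal.span {CEh F n q 0 a},
        r ∈ jacobsonRadicalSet (CE F n q 0 a) := by
      intro r hr M iM1 iM2 hM m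
      refine span_killed {CEh F n q 0 a} M (fun z hz m' => ?_) r hr m
      rw [Set.mem_singleton_iff] at hz
      rw [hz]
      exact CE_kill F n q 0 a _ hhn hhnorm M hM m'
    have hfsurj : Function.Surjective (CEf2 F n q a hn0) := by
      intro y
      obtain ⟨p, rfl⟩ := AdjoinRoot.mk_surjective y
      refine ⟨aeval (CEx F n q 0 a) p, ?_⟩
      rw [← Polynomial.aeval_algHom_apply, CEf2_x, AdjoinRoot.aeval_eq]
    have ker_span : ∀ e, CEf2 F n q a hn0 e = 0 →
        e ∈ TwoSidedIdeal.span {CEh F n q 0 a} := by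
      intro e hfe
      obtain ⟨p, v, hv, rfl⟩ := CE_decomp F n q 0 a (CEx F n q 0 a) {CEh F n q 0 a}
        (Or.inr (TwoSidedIdeal.subset_span (Set.mem_singleton _))) (Or.inl rfl) e
      have hfv : CEf2 F n q a hn0 v = 0 := by
        refine span_le_ker (CEf2 F n q a hn0).toRingHom _ (fun z hz => ?_) v hv
        rw [Set.mem_singleton_iff] at hz
        rw [hz]
        exact CEf2_h F n q a hn0
      rw [map_add, hfv, add_zero, ← Polynomial.aeval_algHom_apply, CEf2_x,
        AdjoinRoot.aeval_eq, AdjoinRoot.mk_eq_zero] at hfe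
      obtain ⟨t, ht⟩ := hfe
      have hz : aeval (CEx F n q 0 a) p = 0 := by
        rw [ht, map_mul, map_sub, map_pow, aeval_X, aeval_C, CE_xpow, sub_self, zero_mul]
      rw [hz, zero_add]
      exact hv
    have rad_ker : ∀ r ∈ jacobsonRadicalSet (CE F n q 0 a), CEf2 F n q a hn0 r = 0 := by
      intro r hr
      apply adjoin_mem_max_eq_zero F n a ha hnF hn0
      intro m hm
      haveI := hm
      letI : Field (AdjoinRoot (X ^ n - C a : F[X]) ⧸ m) := Ideal.Quotient.field m
      set φ : CE F n q 0 a →+* (AdjoinRoot (X ^ n - C a : F[X]) ⧸ m) :=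
        (Ideal.Quotient.mk m).comp (CEf2 F n q a hn0).toRingHom with hφdef
      have hφsurj : Function.Surjective φ := by
        have hco : ⇑φ = (Ideal.Quotient.mk m) ∘ (CEf2 F n q a hn0) := rfl
        rw [hco]
        exact (Ideal.Quotient.mk_surjective).comp hfsurj
      letI : Module (CE F n q 0 a) (AdjoinRoot (X ^ n - C a : F[X]) ⧸ m) :=
        Module.compHom _ φ
      have hsim := simple_module_of_surj φ hφsurj
      have h1 := hr _ _ _ hsim (1 : (AdjoinRoot (X ^ n - C a : F[X]) ⧸ m))
      have h2 : φ r * 1 = 0 := h1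
      rw [mul_one] at h2
      exact Ideal.Quotient.eq_zero_iff_mem.mp h2
    refine ⟨subset_antisymm (fun r hr => ker_span r (rad_ker r hr))
      (fun r hr => span_rad r hr), CEf2 F n q a hn0, hfsurj, fun r =>
      ⟨fun h0 => span_rad r (ker_span r h0), fun hr => rad_ker r hr⟩⟩
  -- ### Case (iii)
  · intro hs ha
    subst hs; subst ha
    have hxn : CEx F n q 0 0 ^ n = 0 := by rw [CE_xpow]; simp
    have hhn : CEh F n q 0 0 ^ n = 0 := by rw [CE_hpow]; simp
    have hxnorm : ∀ e : CE F n q 0 0, ∃ e', CEx F n q 0 0 * e = e' * CEx F n q 0 0 :=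
      CE_normal F n q 0 0 _
        ⟨algebraMap F _ q * CEh F n q 0 0, by rw [CE_comm, mul_assoc]⟩
        ⟨CEx F n q 0 0, rfl⟩
    have hhnorm : ∀ e : CE F n q 0 0, ∃ e', CEh F n q 0 0 * e = e' * CEh F n q 0 0 := by
      refine CE_normal F n q 0 0 _ ⟨CEh F n q 0 0, rfl⟩
        ⟨algebraMap F _ q⁻¹ * CEx F n q 0 0, ?_⟩
      have h2 : algebraMap F (CE F n q 0 0) q⁻¹ * (CEx F n q 0 0 * CEh F n q 0 0) =
          CEh F n q 0 0 * CEx F n q 0 0 := by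
        rw [CE_comm, ← mul_assoc, ← map_mul, inv_mul_cancel₀ hq0, map_one, one_mul]
      rw [mul_assoc, h2]
    have hhmem : CEh F n q 0 0 ∈ TwoSidedIdeal.span {CEx F n q 0 0, CEh F n q 0 0} :=
      TwoSidedIdeal.subset_span (by simp)
    have hxmem : CEx F n q 0 0 ∈ TwoSidedIdeal.span {CEx F n q 0 0, CEh F n q 0 0} :=
      TwoSidedIdeal.subset_span (by simp)
    have span_rad : ∀ r ∈ TwoSidedIdeal.span {CEx F n q 0 0, CEh F n q 0 0},
        r ∈ jacobsonRadicalSet (CE F n q 0 0) := by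
      intro r hr M iM1 iM2 hM m
      refine span_killed {CEx F n q 0 0, CEh F n q 0 0} M (fun z hz m' => ?_) r hr m
      rcases hz with rfl | hz
      · exact CE_kill F n q 0 0 _ hxn hxnorm M hM m'
      · rw [Set.mem_singleton_iff] at hz
        rw [hz]
        exact CE_kill F n q 0 0 _ hhn hhnorm M hM m'
    have hfsurj : Function.Surjective (CEf3 F n q hn0) := by
      intro y
      refine ⟨algebraMap F _ y, ?_⟩
      rw [AlgHom.commutes]
      simp
    have ker_span : ∀ e, CEf3 F n q hn0 e = 0 →
        e ∈ TwoSidedIdeal.span {CEx F n q 0 0, CEh F n q 0 0} := by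
      intro e hfe
      obtain ⟨p, v, hv, rfl⟩ := CE_decomp F n q 0 0 (CEh F n q 0 0)
        {CEx F n q 0 0, CEh F n q 0 0} (Or.inr hhmem) (Or.inr hxmem) e
      have hfv : CEf3 F n q hn0 v = 0 := by
        refine span_le_ker (CEf3 F n q hn0).toRingHom _ (fun z hz => ?_) v hv
        rcases hz with rfl | hz
        · exact CEf3_x F n q hn0
        · rw [Set.mem_singleton_iff] at hz
          rw [hz]
          exact CEf3_h F n q hn0
      rw [map_add, hfv, add_zero, ← Polynomial.aeval_algHom_apply, CEf3_h] at hfe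
      have hc0 : p.coeff 0 = 0 := by
        rw [Polynomial.coeff_zero_eq_eval_zero, ← Polynomial.coe_aeval_eq_eval]
        exact hfe
      obtain ⟨t, ht⟩ := Polynomial.X_dvd_iff.mpr hc0
      have hmem : aeval (CEh F n q 0 0) p ∈
          TwoSidedIdeal.span {CEx F n q 0 0, CEh F n q 0 0} := by
        rw [ht, map_mul, aeval_X]
        exact TwoSidedIdeal.mul_mem_right _ _ _ hhmem
      exact TwoSidedIdeal.add_mem _ hmem hv
    have rad_ker : ∀ r ∈ jacobsonRadicalSet (CE F n q 0 0), CEf3 F n q hn0 r = 0 := by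
      intro r hr
      set φ : CE F n q 0 0 →+* F := (CEf3 F n q hn0).toRingHom with hφdef
      have hφsurj : Function.Surjective φ := hfsurj
      letI : Module (CE F n q 0 0) F := Module.compHom _ φ
      have hsim := simple_module_of_surj φ hφsurj
      have h1 := hr _ _ _ hsim (1 : F)
      have h2 : φ r * 1 = 0 := h1
      rw [mul_one] at h2
      exact h2
    refine ⟨subset_antisymm (fun r hr => ker_span r (rad_ker r hr))
      (fun r hr => span_rad r hr), CEf3 F n q hn0, hfsurj, fun r =>
      ⟨fun h0 => span_rad r (ker_span r h0), fun hr => rad_ker r hr⟩⟩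
end

section
/- Let F be a field, n ≥ 2, q ∈ F a primitive n-th root of unity, and s, a ∈ F with s ≠ 0 and a ≠ 0. Let 𝓔 = (E(s), σ, a) be the F-algebra generated by h and x subject to x·h = q·h·x, h^n = s, x^n = a, where E(s) = F[X]/(X^n − s) is assumed to be a field, with F-algebra automorphism σ determined by σ(h) = q·h. If for every divisor d' of n with d' ≠ n the element a^{d'} is not of the form ∏_{i=0}^{n−1} σ^i(e) for any e ∈ E(s) (i.e., a^{d'} is not in the image of the field norm N_{E(s)/F}), then 𝓔 is a division ring. -/
open Polynomial

lemma rootPowAux {K : Type*} [CommRing K] (n : ℕ) (c : K) :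
    (AdjoinRoot.root (X ^ n - C c)) ^ n = algebraMap K (AdjoinRoot (X ^ n - C c)) c := by
  have h := AdjoinRoot.mk_self (f := (X ^ n - C c))
  rw [map_sub, map_pow, AdjoinRoot.mk_X, AdjoinRoot.mk_C, sub_eq_zero] at h
  exact h

lemma semilinNorm {E V : Type*} [Field E] [AddCommGroup V] [Module E V]
    {m : ℕ} (b : Module.Basis (Fin m) E V) (φ : E →+* E) (T : V →+ V)
    (hsl : ∀ (e : E) (v : V), T (e • v) = φ e • T v)
    (n : ℕ) (c : E) (hT : ∀ v, (⇑T)^[n] v = c • v) :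
    ∃ d : E, ∏ i ∈ Finset.range n, φ^[i] d = c ^ m := by
  classical
  set B : Matrix (Fin m) (Fin m) E := Matrix.of fun i j => b.repr (T (b j)) i with hB
  let Bp : ℕ → Matrix (Fin m) (Fin m) E := fun k => Nat.rec 1 (fun _ M => B * M.map φ) k
  have hBp0 : Bp 0 = 1 := rfl
  have hBps : ∀ k, Bp (k+1) = B * (Bp k).map φ := fun _ => rfl
  have hTb : ∀ j, T (b j) = ∑ i, B i j • b i := by
    intro j
    conv_lhs => rw [← b.sum_repr (T (b j))]
    rfl
  have key : ∀ k j, (⇑T)^[k] (b j) = ∑ i, Bp k i j • b i := by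
    intro k
    induction k with
    | zero =>
      intro j
      simp [hBp0, Matrix.one_apply, ite_smul]
    | succ k ih =>
      intro j
      rw [Function.iterate_succ_apply', ih j, map_sum]
      have : ∀ i, T (Bp k i j • b i) = ∑ l, (φ (Bp k i j) * B l i) • b l := by
        intro i
        rw [hsl, hTb i, Finset.smul_sum]
        exact Finset.sum_congr rfl fun l _ => (smul_smul _ _ _)
      rw [Finset.sum_congr rfl fun i _ => this i, Finset.sum_comm]
      refine Finset.sum_congr rfl fun l _ => ?_
      rw [← Finset.sum_smul, hBps]
      congr 1
      rw [Matrix.mul_apply]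
      exact Finset.sum_congr rfl fun i _ => by rw [Matrix.map_apply, mul_comm]
  have hdiag : Bp n = Matrix.diagonal (fun _ => c) := by
    ext i j
    have h1 : ((⇑T)^[n] (b j)) = c • b j := hT (b j)
    rw [key n j] at h1
    have := congrArg (fun v => b.repr v i) h1
    simpa [Finsupp.single_apply, Matrix.diagonal, eq_comm] using this
  have hdet : ∀ k, (Bp k).det = ∏ i ∈ Finset.range k, φ^[i] B.det := by
    intro k
    induction k with
    | zero => simp [hBp0]
    | succ k ih =>
      have hmd : ((Bp k).map ⇑φ).det = φ (Bp k).det := (RingHom.map_det φ (Bp k)).symm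
      rw [hBps, Matrix.det_mul, hmd, ih, Finset.prod_range_succ', map_prod]
      simp only [Function.iterate_zero_apply]
      rw [mul_comm]
      congr 1
      exact Finset.prod_congr rfl fun i _ => (Function.iterate_succ_apply' φ i B.det).symm
  refine ⟨B.det, ?_⟩
  rw [← hdet, hdiag, Matrix.det_diagonal]
  simp

lemma normGcd {F E : Type*} [Field F] [Field E] [Algebra F E]
    (σ : E ≃ₐ[F] E) (n : ℕ) (hn : n ≠ 0) (a : F) (ha : a ≠ 0)
    {m : ℕ} (hm : ∃ e : E, ∏ i ∈ Finset.range n, (σ ^ i) e = algebraMap F E (a ^ m)) :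
    ∃ e : E, ∏ i ∈ Finset.range n, (σ ^ i) e = algebraMap F E (a ^ Nat.gcd m n) := by
  classical
  let G : AddSubgroup ℤ :=
    { carrier := {j : ℤ | ∃ e : E, ∏ i ∈ Finset.range n, (σ ^ i) e = algebraMap F E (a ^ j)}
      zero_mem' := ⟨1, by simp⟩
      add_mem' := by
        rintro j₁ j₂ ⟨e₁, h₁⟩ ⟨e₂, h₂⟩
        refine ⟨e₁ * e₂, ?_⟩
        rw [zpow_add₀ ha, map_mul]
        rw [← h₁, ← h₂, ← Finset.prod_mul_distrib]
        exact Finset.prod_congr rfl fun i _ => map_mul _ _ _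
      neg_mem' := by
        rintro j ⟨e, he⟩
        have he0 : e ≠ 0 := by
          rintro rfl
          have : (0 : E) = algebraMap F E (a ^ j) := by
            rw [← he]
            exact (Finset.prod_eq_zero (Finset.mem_range.2 (Nat.pos_of_ne_zero hn))
              (by simp)).symm
          exact zpow_ne_zero j ha ((algebraMap F E).injective (by simpa using this.symm))
        refine ⟨e⁻¹, ?_⟩
        have : ∏ i ∈ Finset.range n, (σ ^ i) e⁻¹ = (∏ i ∈ Finset.range n, (σ ^ i) e)⁻¹ := by
          rw [← Finset.prod_inv_distrib]
          exact Finset.prod_congr rfl fun i _ => map_inv₀ _ _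
        rw [this, he, zpow_neg, map_inv₀] }
  have hmem_m : (m : ℤ) ∈ G := by
    obtain ⟨e, he⟩ := hm
    exact ⟨e, by rw [zpow_natCast]; exact he⟩
  have hmem_n : (n : ℤ) ∈ G := by
    refine ⟨algebraMap F E a, ?_⟩
    rw [zpow_natCast, map_pow]
    rw [Finset.prod_congr rfl fun i _ => AlgEquiv.commutes (σ ^ i) a]
    simp
  have hgcd : (Nat.gcd m n : ℤ) ∈ G := by
    rw [Nat.gcd_eq_gcd_ab]
    exact G.add_mem
      (by simpa [smul_eq_mul, mul_comm] using G.zsmul_mem hmem_m (Nat.gcdA m n))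
      (by simpa [smul_eq_mul, mul_comm] using G.zsmul_mem hmem_n (Nat.gcdB m n))
  obtain ⟨e, he⟩ := hgcd
  exact ⟨e, by rw [he, zpow_natCast]⟩

set_option maxHeartbeats 2000000 in
/-- Let `F` be a field, `n ≥ 2`, `q ∈ F` a primitive `n`-th root of unity,
`s, a ∈ F` nonzero, `E(s) = F[X]/(X^n − s)` a field, and `σ` the `F`-algebra automorphism of
`E(s)` with `σ(h) = q·h` (`h` the root). If for every divisor `d'` of `n` with `d' ≠ n` the
element `a^{d'}` is not a norm, i.e. not of the form `∏_{i=0}^{n−1} σ^i(e)` for `e ∈ E(s)`,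
then `𝓔 = (E(s), σ, a)` is a division ring. -/
theorem stmt_9 (F : Type) [Field F] (n : ℕ) (hn : 2 ≤ n) (q : F)
    (hq : IsPrimitiveRoot q n) (s a : F) (hs : s ≠ 0) (ha : a ≠ 0)
    (hfield : IsField (AdjoinRoot (X ^ n - C s : F[X])))
    (σ : AdjoinRoot (X ^ n - C s : F[X]) ≃ₐ[F] AdjoinRoot (X ^ n - C s : F[X]))
    (hσ : σ (AdjoinRoot.root (X ^ n - C s : F[X])) =
      algebraMap F (AdjoinRoot (X ^ n - C s : F[X])) q * AdjoinRoot.root (X ^ n - C s : F[X]))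
    (hnorm : ∀ d' : ℕ, d' ∣ n → d' ≠ n →
      ¬ ∃ e : AdjoinRoot (X ^ n - C s : F[X]),
        ∏ i ∈ Finset.range n, (σ ^ i) e =
          algebraMap F (AdjoinRoot (X ^ n - C s : F[X])) (a ^ d')) :
    Nontrivial (CE F n q s a) ∧ ∀ z : CE F n q s a, z ≠ 0 → IsUnit z := by
  classical
  have hn0 : n ≠ 0 := by omega
  have hnpos : 0 < n := by omega
  have hq1 : q ^ n = 1 := hq.pow_eq_one
  have hq0 : q ≠ 0 := by
    intro h
    rw [h, zero_pow hn0] at hq1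
    exact zero_ne_one hq1
  have hqinv : (q⁻¹ : F) ^ n = 1 := by rw [inv_pow, hq1, inv_one]
  set E := AdjoinRoot (X ^ n - C s : F[X]) with hE
  letI : Field E := hfield.toField
  set h₀ : E := AdjoinRoot.root (X ^ n - C s : F[X]) with hh₀
  have hroot : h₀ ^ n = algebraMap F E s := rootPowAux n s
  -- generators of CE
  set hC : CE F n q s a := RingQuot.mkAlgHom F (CERel F n q s a) (FreeAlgebra.ι F 0) with hhC
  set xC : CE F n q s a := RingQuot.mkAlgHom F (CERel F n q s a) (FreeAlgebra.ι F 1) with hxC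
  have rel1 : xC * hC = algebraMap F (CE F n q s a) q * (hC * xC) := by
    have := RingQuot.mkAlgHom_rel F (CERel.comm (F := F) (n := n) (q := q) (s := s) (a := a))
    simpa [map_mul, AlgHom.commutes] using this
  have rel2 : hC ^ n = algebraMap F (CE F n q s a) s := by
    have := RingQuot.mkAlgHom_rel F (CERel.hpow (F := F) (n := n) (q := q) (s := s) (a := a))
    simpa [map_pow, AlgHom.commutes] using this
  have rel3 : xC ^ n = algebraMap F (CE F n q s a) a := by
    have := RingQuot.mkAlgHom_rel F (CERel.xpow (F := F) (n := n) (q := q) (s := s) (a := a))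
    simpa [map_pow, AlgHom.commutes] using this
  have key1 : ∀ k : ℕ, xC * hC ^ k = (algebraMap F (CE F n q s a) q * hC) ^ k * xC := by
    intro k
    induction k with
    | zero => simp
    | succ k ih =>
      rw [pow_succ, ← mul_assoc, ih, mul_assoc, rel1,
        ← mul_assoc (algebraMap F (CE F n q s a) q) hC xC, ← mul_assoc, ← pow_succ]
  -- the map χ : E →ₐ[F] CE
  have hχ0 : aeval hC ((X : F[X]) ^ n - C s) = 0 := by
    rw [map_sub, aeval_X_pow, aeval_C, rel2, sub_self]
  have hχker : ∀ p : F[X], p ∈ Ideal.span {(X : F[X]) ^ n - C s} → aeval hC p = 0 := by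
    intro p hp
    rw [Ideal.mem_span_singleton] at hp
    obtain ⟨g, rfl⟩ := hp
    rw [map_mul, hχ0, zero_mul]
  set χ : E →ₐ[F] CE F n q s a :=
    Ideal.Quotient.liftₐ (Ideal.span {(X : F[X]) ^ n - C s}) (aeval hC) hχker with hχdef
  have χmk : ∀ p : F[X], χ (AdjoinRoot.mk _ p) = aeval hC p := fun p =>
    Ideal.Quotient.lift_mk _ _ _
  have χroot : χ h₀ = hC := by
    rw [hh₀]
    show χ (AdjoinRoot.mk _ X) = hC
    rw [χmk, aeval_X]
  have commχ : ∀ e : E, xC * χ e = χ (σ e) * xC := by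
    intro e
    induction e using AdjoinRoot.induction_on with
    | ih p =>
      rw [← AdjoinRoot.aeval_eq]
      rw [← hh₀, ← Polynomial.aeval_algHom_apply χ h₀ p]
      have hσp : σ (aeval h₀ p) = aeval (σ h₀) p := by
        exact (Polynomial.aeval_algHom_apply σ.toAlgHom h₀ p).symm
      rw [hσp, ← Polynomial.aeval_algHom_apply χ (σ h₀) p]
      rw [hσ, map_mul, AlgHom.commutes, χroot]
      clear hσp
      induction p using Polynomial.induction_on' with
      | add u v ihu ihv => rw [map_add, map_add, mul_add, add_mul, ihu, ihv]
      | monomial k c =>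
        rw [aeval_monomial, aeval_monomial, ← mul_assoc, ← Algebra.commutes c xC, mul_assoc,
          key1, ← mul_assoc]
  -- E-module structure on CE
  letI : Module E (CE F n q s a) := Module.compHom _ χ.toRingHom
  have hsmul : ∀ (e : E) (w : CE F n q s a), e • w = χ e * w := fun _ _ => rfl
  -- spanning
  set Sgen : Set (CE F n q s a) := Set.range (fun j : Fin n => xC ^ (j : ℕ)) with hSgen
  set S : Submodule E (CE F n q s a) := Submodule.span E Sgen with hS
  have hmemS : ∀ j : ℕ, j < n → xC ^ j ∈ S := fun j hj =>
    Submodule.subset_span ⟨⟨j, hj⟩, rfl⟩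
  have hone : (1 : CE F n q s a) ∈ S := by simpa using hmemS 0 hnpos
  have halg : ∀ c : F, ∀ w : CE F n q s a, algebraMap F (CE F n q s a) c * w
      = (algebraMap F E c) • w := by
    intro c w
    rw [hsmul, AlgHom.commutes]
  have hSx : ∀ v ∈ S, xC * v ∈ S := by
    intro v hv
    induction hv using Submodule.span_induction with
    | mem u hu =>
      obtain ⟨j, rfl⟩ := hu
      rw [← pow_succ']
      by_cases hj : (j : ℕ) + 1 < n
      · exact hmemS _ hj
      · have hj' : (j : ℕ) + 1 = n := by omega
        rw [hj', rel3, ← mul_one (algebraMap F (CE F n q s a) a), halg]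
        exact S.smul_mem _ hone
    | zero => rw [mul_zero]; exact S.zero_mem
    | add u w hu hw ihu ihw => rw [mul_add]; exact S.add_mem ihu ihw
    | smul e u hu ih =>
      rw [hsmul, ← mul_assoc, commχ, mul_assoc, ← hsmul]
      exact S.smul_mem _ ih
  have hSh : ∀ v ∈ S, hC * v ∈ S := by
    intro v hv
    induction hv using Submodule.span_induction with
    | mem u hu =>
      obtain ⟨j, rfl⟩ := hu
      rw [← χroot, ← hsmul]
      exact S.smul_mem _ (hmemS _ j.2)
    | zero => rw [mul_zero]; exact S.zero_mem
    | add u w hu hw ihu ihw => rw [mul_add]; exact S.add_mem ihu ihw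
    | smul e u hu ih =>
      rw [hsmul, ← mul_assoc, ← χroot, ← map_mul, mul_comm h₀ e, map_mul, mul_assoc, χroot,
        ← hsmul]
      exact S.smul_mem _ ih
  have hStop : ∀ w : CE F n q s a, w ∈ S := by
    have Qall : ∀ u : FreeAlgebra F (Fin 2), ∀ v ∈ S,
        RingQuot.mkAlgHom F (CERel F n q s a) u * v ∈ S := by
      intro u
      induction u using FreeAlgebra.induction with
      | grade0 c =>
        intro v hv
        rw [AlgHom.commutes, halg]
        exact S.smul_mem _ hv
      | grade1 i =>
        fin_cases i
        · exact fun v hv => hSh v hv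
        · exact fun v hv => hSx v hv
      | mul u₁ u₂ ih₁ ih₂ =>
        intro v hv
        rw [map_mul, mul_assoc]
        exact ih₁ _ (ih₂ v hv)
      | add u₁ u₂ ih₁ ih₂ =>
        intro v hv
        rw [map_add, add_mul]
        exact S.add_mem (ih₁ v hv) (ih₂ v hv)
    intro w
    obtain ⟨u, rfl⟩ := RingQuot.mkAlgHom_surjective F (CERel F n q s a) w
    simpa using Qall u 1 hone
  have hSeq : S = ⊤ := eq_top_iff.mpr fun w _ => hStop w
  haveI hfinCE : Module.Finite E (CE F n q s a) := by
    refine ⟨⟨Finset.image (fun j : Fin n => xC ^ (j : ℕ)) Finset.univ, ?_⟩⟩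
    rw [Finset.coe_image, Finset.coe_univ, Set.image_univ]
    exact hSeq
  have hrank : Module.finrank E (CE F n q s a) ≤ n := by
    rw [← finrank_top E (CE F n q s a), ← hSeq, hS, hSgen]
    refine le_trans (finrank_span_le_card _) ?_
    rw [Set.toFinset_card]
    exact le_trans (Fintype.card_range_le _) (by simp)
  -- the representation on W for nontriviality
  have hnontrivCE : Nontrivial (CE F n q s a) := by
    set aE : E := algebraMap F E a with haE
    set W := AdjoinRoot (X ^ n - C aE : E[X]) with hW
    set y : W := AdjoinRoot.root (X ^ n - C aE : E[X]) with hy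
    have hyn : y ^ n = algebraMap E W aE := rootPowAux n aE
    have hfix0 : ∀ c : F, algebraMap F W c = algebraMap E W (algebraMap F E c) := by
      intro c
      rw [IsScalarTower.algebraMap_apply F E W]
    have hτ0 : aeval (algebraMap F W q⁻¹ * y) ((X : E[X]) ^ n - C aE) = 0 := by
      rw [map_sub, aeval_X_pow, aeval_C, mul_pow, ← map_pow, hqinv, map_one, one_mul, hyn,
        sub_self]
    set τ : W →ₐ[E] W := AdjoinRoot.liftAlgHom _ (Algebra.ofId E W) (algebraMap F W q⁻¹ * y) hτ0 with hτ
    have τy : τ y = algebraMap F W q⁻¹ * y := by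
      have h := AdjoinRoot.liftAlgHom_root (i := Algebra.ofId E W) (x := algebraMap F W q⁻¹ * y) (h := hτ0)
      rw [hτ]
      exact h
    have hfix : ∀ (g : W →ₐ[E] W) (c : F), g (algebraMap F W c) = algebraMap F W c := by
      intro g c
      rw [hfix0, g.commutes]
    have τpowy : ∀ k : ℕ, (τ ^ k) y = algebraMap F W (q⁻¹ ^ k) * y := by
      intro k
      induction k with
      | zero => simp
      | succ k ih =>
        rw [pow_succ, AlgHom.mul_apply, τy, map_mul, hfix, ih, pow_succ, map_mul]
        ring
    have τn : τ ^ n = 1 := by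
      apply AdjoinRoot.algHom_ext
      rw [AlgHom.one_apply, τpowy, hqinv, map_one, one_mul]
    set hE0 : W := algebraMap E W h₀ with hhE0
    set Hop : Module.End F W :=
      (LinearMap.mulLeft F hE0).comp (τ.toLinearMap.restrictScalars F) with hHop
    set Xop : Module.End F W := LinearMap.mulLeft F y with hXop
    have HopApply : ∀ w : W, Hop w = hE0 * τ w := fun _ => rfl
    have XopApply : ∀ w : W, Xop w = y * w := fun _ => rfl
    have XpowApply : ∀ (k : ℕ) (w : W), (Xop ^ k) w = y ^ k * w := by
      intro k
      induction k with
      | zero => intro w; simp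
      | succ k ih =>
        intro w
        rw [pow_succ', Module.End.mul_apply, ih, XopApply, pow_succ', mul_assoc]
    have HpowApply : ∀ (k : ℕ) (w : W), (Hop ^ k) w = hE0 ^ k * (τ ^ k) w := by
      intro k
      induction k with
      | zero => intro w; simp
      | succ k ih =>
        intro w
        rw [pow_succ, Module.End.mul_apply, HopApply, ih, map_mul, AlgHom.commutes, pow_succ]
        rw [pow_succ τ k, AlgHom.mul_apply]
        ring
    have hqc : algebraMap F W q * algebraMap F W q⁻¹ = 1 := by
      rw [← map_mul, mul_inv_cancel₀ hq0, map_one]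
    have R1 : Xop * Hop = algebraMap F (Module.End F W) q * (Hop * Xop) := by
      apply LinearMap.ext
      intro w
      rw [Module.End.mul_apply, Module.End.mul_apply, Module.algebraMap_end_apply,
        Module.End.mul_apply, XopApply, HopApply, HopApply, XopApply, map_mul, τy,
        Algebra.smul_def]
      linear_combination (-(hE0 * y * τ w)) * hqc
    have R2 : Hop ^ n = algebraMap F (Module.End F W) s := by
      apply LinearMap.ext
      intro w
      rw [HpowApply, τn, AlgHom.one_apply, Module.algebraMap_end_apply, Algebra.smul_def,
        ← map_pow, hroot, ← hfix0]
    have R3 : Xop ^ n = algebraMap F (Module.End F W) a := by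
      apply LinearMap.ext
      intro w
      rw [XpowApply, hyn, Module.algebraMap_end_apply, Algebra.smul_def, ← hfix0]
    set Φ₀ : FreeAlgebra F (Fin 2) →ₐ[F] Module.End F W :=
      FreeAlgebra.lift F ![Hop, Xop] with hΦ₀
    have hrel : ∀ ⦃u v : FreeAlgebra F (Fin 2)⦄, CERel F n q s a u v → Φ₀ u = Φ₀ v := by
      intro u v r
      cases r with
      | comm =>
        simp only [hΦ₀, map_mul, FreeAlgebra.lift_ι_apply, AlgHom.commutes, Matrix.cons_val_zero,
          Matrix.cons_val_one, Matrix.head_cons]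
        exact R1
      | hpow =>
        simp only [hΦ₀, map_pow, FreeAlgebra.lift_ι_apply, AlgHom.commutes, Matrix.cons_val_zero]
        exact R2
      | xpow =>
        simp only [hΦ₀, map_pow, FreeAlgebra.lift_ι_apply, AlgHom.commutes, Matrix.cons_val_one,
          Matrix.head_cons]
        exact R3
    set Φ : CE F n q s a →ₐ[F] Module.End F W := RingQuot.liftAlgHom F ⟨Φ₀, hrel⟩ with hΦ
    haveI : Nontrivial W := by
      refine AdjoinRoot.nontrivial _ ?_
      rw [degree_X_pow_sub_C hnpos]
      simp [hn0]
    refine ⟨1, 0, fun h10 => ?_⟩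
    have : (1 : Module.End F W) = 0 := by
      rw [← map_one Φ, ← map_zero Φ, h10]
    have h2 : (1 : W) = 0 := by
      calc (1 : W) = (1 : Module.End F W) (1 : W) := rfl
      _ = (0 : Module.End F W) (1 : W) := by rw [this]
      _ = 0 := rfl
    exact one_ne_zero h2
  refine ⟨hnontrivCE, fun z hz => ?_⟩
  set Rz : CE F n q s a →ₗ[E] CE F n q s a :=
    { toFun := fun w => w * z
      map_add' := fun u v => add_mul u v z
      map_smul' := fun e w => by
        simp only [RingHom.id_apply]
        rw [hsmul, hsmul, mul_assoc] } with hRz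
  by_cases htop : LinearMap.range Rz = ⊤
  · have h1 : (1 : CE F n q s a) ∈ LinearMap.range Rz := by rw [htop]; exact Submodule.mem_top
    obtain ⟨p, hp⟩ := h1
    have hp' : p * z = 1 := hp
    have hsurj : Function.Surjective Rz := LinearMap.range_eq_top.mp htop
    have hinj : Function.Injective Rz := LinearMap.injective_iff_surjective.mpr hsurj
    have hzp : z * p = 1 := by
      have h2 : Rz (z * p) = Rz 1 := by
        show (z * p) * z = 1 * z
        rw [mul_assoc, hp', mul_one, one_mul]
      exact hinj h2
    exact ⟨⟨z, p, hzp, hp'⟩, rfl⟩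
  · exfalso
    set I : Submodule E (CE F n q s a) := LinearMap.range Rz with hI
    have hzI : z ∈ I := ⟨1, one_mul z⟩
    haveI : Nontrivial I :=
      ⟨⟨⟨z, hzI⟩, 0, fun hc => hz (by simpa using congrArg Subtype.val hc)⟩⟩
    set m := Module.finrank E I with hm
    have hm1 : 0 < m := Module.finrank_pos (R := E) (M := I)
    have hmn : m < n :=
      lt_of_lt_of_le (Submodule.finrank_lt htop) hrank
    have hTmem : ∀ v : CE F n q s a, v ∈ I → xC * v ∈ I := by
      rintro v ⟨w, rfl⟩
      refine ⟨xC * w, ?_⟩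
      show (xC * w) * z = xC * (w * z)
      exact mul_assoc xC w z
    set T : I →+ I := AddMonoidHom.mk'
      (fun v => ⟨xC * (v : CE F n q s a), hTmem v v.2⟩)
      (fun u v => Subtype.ext (by simp [mul_add])) with hT
    have hslT : ∀ (e : E) (v : I), T (e • v) = (σ.toAlgHom.toRingHom e) • T v := by
      intro e v
      apply Subtype.ext
      show xC * (((e • v) : I) : CE F n q s a) = (((σ e) • T v : I) : CE F n q s a)
      rw [Submodule.coe_smul, Submodule.coe_smul, hsmul, hsmul, ← mul_assoc, commχ, mul_assoc]
      rfl
    have hiterT : ∀ (k : ℕ) (v : I), (((⇑T)^[k] v : I) : CE F n q s a)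
        = xC ^ k * (v : CE F n q s a) := by
      intro k
      induction k with
      | zero => intro v; simp
      | succ k ih =>
        intro v
        rw [Function.iterate_succ_apply']
        show xC * (((⇑T)^[k] v : I) : CE F n q s a) = _
        rw [ih, ← mul_assoc, ← pow_succ']
    have hTn : ∀ v : I, (⇑T)^[n] v = (algebraMap F E a) • v := by
      intro v
      apply Subtype.ext
      rw [hiterT n v, rel3, Submodule.coe_smul, halg]
    haveI : Module.Free E (↥I) := Module.Free.of_divisionRing E ↥I
    obtain ⟨d, hd⟩ := semilinNorm (Module.finBasis E I) σ.toAlgHom.toRingHom T hslT n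
      (algebraMap F E a) hTn
    have hconv : ∀ (i : ℕ) (e : E), (⇑(σ.toAlgHom.toRingHom))^[i] e = (σ ^ i) e := by
      intro i
      induction i with
      | zero => intro e; simp
      | succ i ih =>
        intro e
        rw [Function.iterate_succ_apply', ih, pow_succ', AlgEquiv.mul_apply]
        rfl
    rw [Finset.prod_congr rfl (fun i _ => hconv i d), ← map_pow] at hd
    obtain ⟨e, he⟩ := normGcd σ n hn0 a ha ⟨d, hd⟩
    have hgle : Nat.gcd m n ≤ m := Nat.gcd_le_left n hm1
    exact hnorm (Nat.gcd m n) (Nat.gcd_dvd_right m n) (by omega) ⟨e, he⟩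
end

section
/- Let R be a ring that is free as a module over its center Z(R). Then for every maximal ideal 𝔪 of Z(R) there exists a simple left R-module M such that the contraction of the annihilator of M to the center equals 𝔪, i.e., {z ∈ Z(R) : z·m = 0 for all m ∈ M} = 𝔪. -/
universe u

/-- Let `R` be a ring that is free as a module over its center `Z(R)`. Then
for every maximal ideal `𝔪` of `Z(R)` there is a simple left `R`-module `M` such that the
contraction of `ann_R(M)` to the center is exactly `𝔪`, i.e.
`{z ∈ Z(R) : z·m = 0 for all m ∈ M} = 𝔪`. -/
theorem stmt_16 (R : Type u) [Ring R] (hfree : Module.Free (Subring.center R) R)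
    (𝔪 : Ideal (Subring.center R)) (hmax : 𝔪.IsMaximal) :
    ∃ (M : Type u) (_ : AddCommGroup M) (_ : Module R M),
      IsSimpleModule R M ∧
      ∀ z : Subring.center R, (∀ m : M, (z : R) • m = 0) ↔ z ∈ 𝔪 := by
  classical
  have hZ : Nontrivial (Subring.center R) := by
    by_contra h
    rw [not_nontrivial_iff_subsingleton] at h
    exact hmax.ne_top (Subsingleton.elim _ _)
  have hR : Nontrivial R := by
    refine ⟨1, 0, fun h => one_ne_zero (α := Subring.center R) (Subtype.ext ?_)⟩
    simpa using h
  set Z := Subring.center R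
  let b := Module.Free.chooseBasis Z R
  set N : Submodule Z R := 𝔪 • ⊤ with hNdef
  have hsmul : ∀ (z : Z) (y : R), z • y = (z : R) * y := fun z y => rfl
  have hmul : ∀ (r x : R), x ∈ N → r * x ∈ N := by
    intro r x hx
    refine Submodule.smul_induction_on hx ?_ ?_
    · intro z hz y _
      have : r * (z • y) = z • (r * y) := by
        rw [hsmul, hsmul, ← mul_assoc, ← mul_assoc, z.2.comm]
      rw [this]
      exact Submodule.smul_mem_smul hz trivial
    · intro a c ha hc
      rw [mul_add]; exact N.add_mem ha hc
  have hN_ne : (1 : R) ∉ N := by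
    intro h1
    have hall : ∀ r : R, r ∈ N := fun r => by
      have := hmul r 1 h1; simpa using this
    have i : Module.Free.ChooseBasisIndex Z R := Classical.arbitrary _
    have hmem : b i ∈ 𝔪 • Submodule.span Z (Set.range b) := by
      rw [b.span_eq]; exact hall (b i)
    obtain ⟨a, ha, hsum⟩ :=
      (Submodule.mem_ideal_smul_span_iff_exists_sum 𝔪 b (b i)).mp hmem
    have heq : b.repr.symm a = b i := by
      rw [Module.Basis.repr_symm_apply, Finsupp.linearCombination_apply]; exact hsum
    have ha' : a = b.repr (b i) := by rw [← heq, LinearEquiv.apply_symm_apply]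
    rw [b.repr_self] at ha'
    have h1 : (1 : Z) ∈ 𝔪 := by
      have := ha i
      rw [ha', Finsupp.single_eq_same] at this
      exact this
    exact hmax.ne_top ((Ideal.eq_top_iff_one 𝔪).mpr h1)
  set J : Ideal R := Ideal.span ((↑) '' (𝔪 : Set Z)) with hJdef
  have hJN : (J : Set R) ⊆ N := by
    intro x hx
    refine Submodule.span_induction ?_ ?_ ?_ ?_ hx
    · rintro _ ⟨z, hz, rfl⟩
      have : (z : R) = z • (1 : R) := by rw [hsmul, mul_one]
      rw [this]
      exact Submodule.smul_mem_smul hz trivial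
    · exact N.zero_mem
    · intro a c _ _ ha hc; exact N.add_mem ha hc
    · intro r a _ ha; exact hmul r a ha
  have hJ_ne : J ≠ ⊤ := by
    intro h
    exact hN_ne (hJN (by rw [h]; trivial))
  obtain ⟨I, hImax, hJI⟩ := Ideal.exists_le_maximal J hJ_ne
  have hcoe : ∀ z : Z, z ∈ 𝔪 → (z : R) ∈ I := fun z hz =>
    hJI (Ideal.subset_span ⟨z, hz, rfl⟩)
  refine ⟨R ⧸ I, inferInstance, inferInstance, ?_, ?_⟩
  · exact isSimpleModule_iff_isCoatom.mpr hImax.out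
  · intro z
    constructor
    · intro h
      by_contra hz
      obtain ⟨c, i, hi, hci⟩ := hmax.exists_inv hz
      have h1 := h (Submodule.Quotient.mk 1)
      rw [← Submodule.Quotient.mk_smul, smul_eq_mul, mul_one,
        Submodule.Quotient.mk_eq_zero] at h1
      have : ((1 : Z) : R) ∈ I := by
        rw [← hci]
        push_cast
        exact I.add_mem (Ideal.mul_mem_left I _ h1) (hcoe i hi)
      exact hImax.ne_top ((Ideal.eq_top_iff_one I).mpr (by simpa using this))
    · intro hz m
      obtain ⟨r, rfl⟩ := Submodule.Quotient.mk_surjective I m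
      rw [← Submodule.Quotient.mk_smul, Submodule.Quotient.mk_eq_zero]
      have : (z : R) • r = r * (z : R) := by
        rw [smul_eq_mul, (Subring.mem_center_iff.mp z.2 r)]
      rw [this]
      exact Ideal.mul_mem_left I r (hcoe z hz)
end
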